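/- arXiv:1302.2380 — 3 statements merged into one kernel-verified Lean document; each statement's English description precedes it below -/
import Mathlib

section
/- Let d₋₁, d₊₁, D, D̃ be closed disks in ℂ such that: D̃ is contained in the interior of D; both D and D̃ meet both d₋₁ and d₊₁; the set d₋₁ ∩ d₊₁ ∩ D is empty; and neither d₋₁ nor d₊₁ is contained in D. Writing θ₋₁ = ∠(D, d₋₁), θ̃₋₁ = ∠(D̃, d₋₁), θ₊₁ = ∠(D, d₊₁), θ̃₊₁ = ∠(D̃, d₊₁), we have θ̃₋₁ + θ̃₊₁ < θ₋₁ + θ₊₁. -/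
open Metric Real

/-- The external intersection angle between two overlapping closed metric disks in `ℂ`
(neither contained in the other), computed from centers and radii. -/
noncomputable def extAngle (c₁ : ℂ) (r₁ : ℝ) (c₂ : ℂ) (r₂ : ℝ) : ℝ :=
  Real.arccos ((dist c₁ c₂ ^ 2 - r₁ ^ 2 - r₂ ^ 2) / (2 * r₁ * r₂))

namespace MeatAux

def dot (x y : ℂ) : ℝ := x.re * y.re + x.im * y.im

lemma abs_sq (x : ℂ) : ‖x‖ ^ 2 = dot x x := by
  rw [Complex.sq_norm, Complex.normSq_apply, dot]

lemma dot_le (x y : ℂ) : dot x y ≤ ‖x‖ * ‖y‖ := by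
  have h1 := abs_sq x
  have h2 := abs_sq y
  have hx := norm_nonneg x
  have hy := norm_nonneg y
  simp only [dot] at *
  nlinarith [sq_nonneg (x.re * y.im - x.im * y.re), sq_nonneg (‖x‖ * ‖y‖ - (x.re*y.re + x.im*y.im)), mul_nonneg hx hy]

lemma dot_conj (x y : ℂ) : dot x y = ((starRingEnd ℂ) x * y).re := by
  simp [dot, Complex.mul_re]

lemma arcs (e₁ e₂ : ℂ) (h₁ : ‖e₁‖ = 1) (h₂ : ‖e₂‖ = 1)
    {C₁ C₂ : ℝ} (hC₁ : -1 < C₁) (hC₁' : C₁ < 1) (hC₂ : -1 < C₂) (hC₂' : C₂ < 1)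
    (H : ∀ ω : ℂ, ‖ω‖ = 1 → dot ω e₁ < C₁ ∨ dot ω e₂ < C₂) :
    dot e₁ e₂ < C₁*C₂ - Real.sqrt (1-C₁^2) * Real.sqrt (1-C₂^2) ∧
    0 < C₁ * Real.sqrt (1-C₂^2) + C₂ * Real.sqrt (1-C₁^2) := by
  set β₁ := Real.arccos C₁ with hβ₁
  set β₂ := Real.arccos C₂ with hβ₂
  have hβ₁pos : 0 < β₁ := Real.arccos_pos.2 hC₁'
  have hβ₂pos : 0 < β₂ := Real.arccos_pos.2 hC₂'
  have harccos_lt_pi : ∀ x : ℝ, -1 < x → x < 1 → Real.arccos x < π := by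
    intro x hx hx'
    rcases (Real.arccos_le_pi x).lt_or_eq with h' | h'
    · exact h'
    · have h := Real.cos_arccos hx.le hx'.le
      rw [h', Real.cos_pi] at h; linarith
  have hβ₁pi : β₁ < π := harccos_lt_pi _ hC₁ hC₁'
  have hβ₂pi : β₂ < π := harccos_lt_pi _ hC₂ hC₂'
  have hcos₁ : Real.cos β₁ = C₁ := Real.cos_arccos hC₁.le hC₁'.le
  have hcos₂ : Real.cos β₂ = C₂ := Real.cos_arccos hC₂.le hC₂'.le
  have hsin₁ : Real.sin β₁ = Real.sqrt (1 - C₁^2) := Real.sin_arccos C₁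
  have hsin₂ : Real.sin β₂ = Real.sqrt (1 - C₂^2) := Real.sin_arccos C₂
  -- the unit complex number of relative angle
  set z := (starRingEnd ℂ) e₁ * e₂ with hz
  have hzabs : ‖z‖ = 1 := by
    simp [hz, map_mul, h₁, h₂]
  have hzne : z ≠ 0 := by
    intro h; rw [h] at hzabs; simp at hzabs
  set t := z.arg with ht
  have hzre : z.re = Real.cos t := by
    have := Complex.cos_arg hzne
    rw [hzabs] at this; simp at this; rw [this]
  have hzim : z.im = Real.sin t := by
    have := Complex.sin_arg z
    rw [hzabs] at this; simp at this; rw [this]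
  set ψ := |t| with hψ
  have hψ0 : 0 ≤ ψ := abs_nonneg t
  have hψpi : ψ ≤ π := Complex.abs_arg_le_pi z
  set m := min β₁ ψ with hm
  have hm0 : 0 ≤ m := le_min hβ₁pos.le hψ0
  have hmψ : m ≤ ψ := min_le_right _ _
  set m' : ℝ := if 0 ≤ t then m else -m with hm'
  set ω := e₁ * (↑(Real.cos m') + ↑(Real.sin m') * Complex.I) with hω
  have hωabs : ‖ω‖ = 1 := by
    rw [hω, norm_mul, h₁, one_mul, Complex.ofReal_cos, Complex.ofReal_sin,
      Complex.norm_cos_add_sin_mul_I]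
  have hconj : (starRingEnd ℂ) e₁ * e₁ = 1 := by
    rw [← Complex.normSq_eq_conj_mul_self]
    have h : Complex.normSq e₁ = 1 := by
      have := Complex.sq_norm e₁; rw [h₁] at this; simpa using this.symm
    rw [h]; simp
  have hdot1 : dot ω e₁ = Real.cos m := by
    rw [dot_conj, hω]
    have h1 : (starRingEnd ℂ) (e₁ * (↑(Real.cos m') + ↑(Real.sin m') * Complex.I)) * e₁
        = (↑(Real.cos m') - ↑(Real.sin m') * Complex.I) * ((starRingEnd ℂ) e₁ * e₁) := by
      simp only [map_mul, map_add, Complex.conj_ofReal, Complex.conj_I]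
      ring
    rw [h1, hconj, mul_one]
    have h2 : ((↑(Real.cos m') - ↑(Real.sin m') * Complex.I) : ℂ).re = Real.cos m' := by
      simp only [Complex.sub_re, Complex.mul_re, Complex.ofReal_re, Complex.ofReal_im,
        Complex.I_re, Complex.I_im]
      ring
    rw [h2]
    have hmm : m' = m ∨ m' = -m := by
      rw [hm']; split
      · exact Or.inl rfl
      · exact Or.inr rfl
    rcases hmm with h | h
    · rw [h]
    · rw [h, Real.cos_neg]
  have hdot2 : dot ω e₂ = Real.cos (ψ - m) := by
    rw [dot_conj, hω]
    have heq : (starRingEnd ℂ) (e₁ * (↑(Real.cos m') + ↑(Real.sin m') * Complex.I)) * e₂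
        = (↑(Real.cos m') - ↑(Real.sin m') * Complex.I) * z := by
      rw [hz]
      simp only [map_mul, map_add, Complex.conj_ofReal, Complex.conj_I]
      ring
    rw [heq]
    have hre : ((↑(Real.cos m') - ↑(Real.sin m') * Complex.I) * z).re
        = Real.cos m' * Real.cos t + Real.sin m' * Real.sin t := by
      simp only [Complex.mul_re, Complex.sub_re, Complex.sub_im, Complex.mul_im,
        Complex.ofReal_re, Complex.ofReal_im, Complex.I_re, Complex.I_im, hzre, hzim]
      ring
    rw [hre]
    have hcs : Real.cos m' * Real.cos t + Real.sin m' * Real.sin t = Real.cos (t - m') := by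
      rw [Real.cos_sub]; ring
    rw [hcs]
    rcases le_or_gt 0 t with hts | hts
    · have ha : m' = m := if_pos hts
      have hb : ψ = t := abs_of_nonneg hts
      rw [ha, hb]
    · have ha : m' = -m := if_neg (not_le.2 hts)
      have hb : ψ = -t := abs_of_neg hts
      rw [ha, hb]
      have h3 : t - -m = -(-t - m) := by ring
      rw [h3, Real.cos_neg]
  -- use H
  have hC₁le : C₁ ≤ dot ω e₁ := by
    rw [hdot1, ← hcos₁]
    exact Real.cos_le_cos_of_nonneg_of_le_pi hm0 hβ₁pi.le (min_le_left _ _)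
  have hlt : dot ω e₂ < C₂ := by
    rcases H ω hωabs with h | h
    · linarith
    · exact h
  rw [hdot2, ← hcos₂] at hlt
  have hβ₂lt : β₂ < ψ - m := by
    by_contra hcon
    push_neg at hcon
    have := Real.cos_le_cos_of_nonneg_of_le_pi (by linarith) hβ₂pi.le hcon
    linarith
  have hmβ₁ : m = β₁ := by
    rcases min_cases β₁ ψ with ⟨h, _⟩ | ⟨h, h'⟩
    · exact h
    · exfalso; rw [hm] at *; linarith [hβ₂lt]
  have hsum : β₁ + β₂ < ψ := by rw [hmβ₁] at hβ₂lt; linarith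
  constructor
  · have hde : dot e₁ e₂ = z.re := by rw [dot_conj, hz]
    rw [hde, hzre]
    have : Real.cos t = Real.cos ψ := by
      rw [hψ]; rcases le_or_gt 0 t with h | h
      · rw [abs_of_nonneg h]
      · rw [abs_of_neg h, Real.cos_neg]
    rw [this]
    have := Real.cos_lt_cos_of_nonneg_of_le_pi (by positivity) hψpi hsum
    rw [Real.cos_add, hcos₁, hcos₂, hsin₁, hsin₂] at this
    linarith
  · have h0 : 0 < β₁ + β₂ := by linarith
    have hpi : β₁ + β₂ < π := by linarith
    have := Real.sin_pos_of_pos_of_lt_pi h0 hpi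
    rw [Real.sin_add, hcos₁, hcos₂, hsin₁, hsin₂] at this
    linarith

lemma abs_sub_sq' (z w : ℂ) : ‖z - w‖ ^ 2
    = ‖z‖ ^ 2 + ‖w‖ ^ 2 - 2 * dot z w := by
  rw [abs_sq, abs_sq, abs_sq]
  simp only [dot, Complex.sub_re, Complex.sub_im]
  ring

lemma dot_real_mul (r : ℝ) (x y : ℂ) : dot ((r:ℂ) * x) y = r * dot x y := by
  simp only [dot, Complex.mul_re, Complex.mul_im, Complex.ofReal_re, Complex.ofReal_im]
  ring


lemma bnd_pos (R r d : ℝ) (hR : 0 < R) (hr : 0 < r) (h1 : R - r < d) (h2 : r - R < d) :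
    0 < d := by rcases le_total r R with h | h <;> linarith

lemma bndC (R r d : ℝ) (hR : 0 < R) (hr : 0 < r) (hd : 0 < d)
    (h1 : R - r < d) (h2 : r - R < d) (h3 : d < R + r) :
    -1 < (d^2+R^2-r^2)/(2*R*d) ∧ (d^2+R^2-r^2)/(2*R*d) < 1 := by
  constructor
  · rw [lt_div_iff₀ (by positivity)]; nlinarith
  · rw [div_lt_iff₀ (by positivity)]; nlinarith

lemma bndF (R r d : ℝ) (hR : 0 < R) (hr : 0 < r) (hd : 0 < d)
    (h1 : R - r < d) (h2 : r - R < d) (h3 : d < R + r) :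
    -1 < (d^2-R^2-r^2)/(2*R*r) ∧ (d^2-R^2-r^2)/(2*R*r) < 1 := by
  constructor
  · rw [lt_div_iff₀ (by positivity)]; nlinarith
  · rw [div_lt_iff₀ (by positivity)]; nlinarith

lemma sqrt_pos_of_bd {x : ℝ} (h1 : -1 < x) (h2 : x < 1) : 0 < Real.sqrt (1 - x^2) :=
  Real.sqrt_pos.2 (by nlinarith)

lemma sq_sqrt_of_bd {x : ℝ} (h1 : -1 < x) (h2 : x < 1) : Real.sqrt (1 - x^2)^2 = 1 - x^2 :=
  Real.sq_sqrt (by nlinarith)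

lemma le_of_sq_le_sq' (x r : ℝ) (h : x^2 ≤ r^2) (hx : 0 ≤ x) (hr : 0 < r) : x ≤ r := by
  nlinarith

lemma cs_step (S₁ S₂ C₁ C₂ p aw au ρ W : ℝ) (hS₁ : 0 < S₁) (hS₂ : 0 < S₂)
    (h1 : S₁^2 = 1 - C₁^2) (h2 : S₂^2 = 1 - C₂^2)
    (hp : p < C₁*C₂ - S₁*S₂) (hK : 0 < C₁*S₂ + C₂*S₁)
    (hawsq : aw^2 = S₂^2 + S₁^2 + 2*S₁*S₂*p) (haw : 0 ≤ aw)
    (hW : W ≤ aw * au) (hau : 0 ≤ au) (hauρ : au < ρ) :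
    W < (C₁*S₂ + C₂*S₁)*ρ := by
  have h1' : C₁^2 = 1 - S₁^2 := by linarith
  have h2' : C₂^2 = 1 - S₂^2 := by linarith
  have hKsq : (C₁*S₂+C₂*S₁)^2 - aw^2 = 2*S₁*S₂*(C₁*C₂ - S₁*S₂ - p) := by
    rw [hawsq]
    linear_combination (S₂^2) * h1' + (S₁^2) * h2'
  have hgap : 0 < 2*S₁*S₂*(C₁*C₂ - S₁*S₂ - p) :=
    mul_pos (by positivity) (by linarith)
  have hK2 : aw^2 < (C₁*S₂+C₂*S₁)^2 := by linarith
  have hawK : aw < C₁*S₂+C₂*S₁ := by nlinarith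
  have hρ : 0 < ρ := lt_of_le_of_lt hau hauρ
  have s1 : aw * au ≤ aw * ρ := mul_le_mul_of_nonneg_left hauρ.le haw
  have s2 : aw * ρ < (C₁*S₂+C₂*S₁) * ρ := mul_lt_mul_of_pos_right hawK hρ
  linarith

set_option maxHeartbeats 2000000 in
lemma key (c a₁ a₂ u : ℂ) (R r₁ r₂ ρ : ℝ) (hR : 0 < R) (hr₁ : 0 < r₁) (hr₂ : 0 < r₂)
    (hu : ‖u‖ < ρ)
    (h1l : R - r₁ < dist c a₁) (h1l' : r₁ - R < dist c a₁) (h1u : dist c a₁ < R + r₁)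
    (h2l : R - r₂ < dist c a₂) (h2l' : r₂ - R < dist c a₂) (h2u : dist c a₂ < R + r₂)
    (H : ∀ x : ℂ, dist x c ≤ R → dist x a₁ ≤ r₁ → dist x a₂ ≤ r₂ → False) :
    0 < (2*R*dot (c - a₁) u + ρ*(dist c a₁^2 + R^2 - r₁^2)) / (2*r₁*R^2)
          * Real.sqrt (1 - ((dist c a₂^2 - R^2 - r₂^2)/(2*R*r₂))^2)
      + (2*R*dot (c - a₂) u + ρ*(dist c a₂^2 + R^2 - r₂^2)) / (2*r₂*R^2)
          * Real.sqrt (1 - ((dist c a₁^2 - R^2 - r₁^2)/(2*R*r₁))^2) := by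
  have hρ : 0 < ρ := lt_of_le_of_lt (norm_nonneg u) hu
  set d₁ := dist c a₁ with hd₁def
  set d₂ := dist c a₂ with hd₂def
  have hd₁ : 0 < d₁ := bnd_pos R r₁ d₁ hR hr₁ h1l h1l'
  have hd₂ : 0 < d₂ := bnd_pos R r₂ d₂ hR hr₂ h2l h2l' 
  set C₁ := (d₁^2 + R^2 - r₁^2) / (2*R*d₁) with hC₁def
  set C₂ := (d₂^2 + R^2 - r₂^2) / (2*R*d₂) with hC₂def
  obtain ⟨hC₁m, hC₁p⟩ := bndC R r₁ d₁ hR hr₁ hd₁ h1l h1l' h1u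
  obtain ⟨hC₂m, hC₂p⟩ := bndC R r₂ d₂ hR hr₂ hd₂ h2l h2l' h2u
  set e₁ : ℂ := (a₁ - c) / (d₁ : ℂ) with he₁def
  set e₂ : ℂ := (a₂ - c) / (d₂ : ℂ) with he₂def
  have habs₁ : ‖a₁ - c‖ = d₁ := by
    rw [hd₁def, dist_comm, Complex.dist_eq]
  have habs₂ : ‖a₂ - c‖ = d₂ := by
    rw [hd₂def, dist_comm, Complex.dist_eq]
  have he₁ : ‖e₁‖ = 1 := by
    rw [he₁def, norm_div, habs₁, Complex.norm_real, Real.norm_eq_abs, abs_of_pos hd₁, div_self hd₁.ne']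
  have he₂ : ‖e₂‖ = 1 := by
    rw [he₂def, norm_div, habs₂, Complex.norm_real, Real.norm_eq_abs, abs_of_pos hd₂, div_self hd₂.ne']
  have hea₁ : a₁ - c = (d₁ : ℂ) * e₁ := by
    rw [he₁def, mul_div_cancel₀]
    exact_mod_cast hd₁.ne'
  have hea₂ : a₂ - c = (d₂ : ℂ) * e₂ := by
    rw [he₂def, mul_div_cancel₀]
    exact_mod_cast hd₂.ne'
  -- translate emptiness into the boundary-arc form
  have H' : ∀ ω : ℂ, ‖ω‖ = 1 → dot ω e₁ < C₁ ∨ dot ω e₂ < C₂ := by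
    intro ω hω
    by_contra hcon
    push_neg at hcon
    obtain ⟨hge₁, hge₂⟩ := hcon
    set x := c + (R : ℂ) * ω with hxdef
    have hxc : dist x c ≤ R := by
      rw [hxdef, Complex.dist_eq]
      have : c + (R:ℂ)*ω - c = (R:ℂ)*ω := by ring
      rw [this, norm_mul, Complex.norm_real, Real.norm_eq_abs, abs_of_pos hR, hω, mul_one]
    have hdista : ∀ (a : ℂ) (r : ℝ) (e : ℂ) (C : ℝ), a - c = ((dist c a : ℝ):ℂ) * e →
        ‖e‖ = 1 →
        C ≤ dot ω e → (dist c a^2 + R^2 - r^2)/(2*R*dist c a) = C → 0 < dist c a → 0 < r →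
        dist x a ≤ r := by
      intro a r e C hea heabs hge hCdef hd hr
      have hsq : dist x a ^2 = R^2 + dist c a^2 - 2*R*(dist c a * dot ω e) := by
        rw [Complex.dist_eq, hxdef]
        have : c + (R:ℂ)*ω - a = (R:ℂ)*ω - (a - c) := by ring
        rw [this, abs_sub_sq', hea, norm_mul, Complex.norm_real, Real.norm_eq_abs, abs_of_pos hR, hω, mul_one]
        have : dot ((R:ℂ)*ω) (((dist c a : ℝ):ℂ) * e) = R * (dist c a * dot ω e) := by
          rw [dot_real_mul]
          have : dot ω (((dist c a : ℝ):ℂ) * e) = dist c a * dot ω e := by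
            simp only [dot, Complex.mul_re, Complex.mul_im, Complex.ofReal_re, Complex.ofReal_im]
            ring
          rw [this]
        rw [this, norm_mul, Complex.norm_real, Real.norm_eq_abs, abs_of_pos hd, heabs]
        ring
      have hCle : dist c a^2 + R^2 - r^2 ≤ 2*R*(dist c a * dot ω e) := by
        have h2 : (dist c a^2 + R^2 - r^2)/(2*R*dist c a) ≤ dot ω e := by
          rw [hCdef]; exact hge
        have h3 := (div_le_iff₀ (by positivity)).1 h2
        nlinarith [h3]
      have hle : dist x a ^ 2 ≤ r^2 := by rw [hsq]; linarith
      exact le_of_sq_le_sq' _ _ hle (dist_nonneg) hr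
    have hxa₁ : dist x a₁ ≤ r₁ := hdista a₁ r₁ e₁ C₁ (by rw [← hd₁def]; exact hea₁) he₁ hge₁
      (by rw [← hd₁def, hC₁def]) (by rw [← hd₁def]; exact hd₁) hr₁
    have hxa₂ : dist x a₂ ≤ r₂ := hdista a₂ r₂ e₂ C₂ (by rw [← hd₂def]; exact hea₂) he₂ hge₂
      (by rw [← hd₂def, hC₂def]) (by rw [← hd₂def]; exact hd₂) hr₂
    exact H x hxc hxa₁ hxa₂
  obtain ⟨hA, hK⟩ := arcs e₁ e₂ he₁ he₂ hC₁m hC₁p hC₂m hC₂p H'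
  set S₁ := Real.sqrt (1 - C₁^2) with hS₁def
  set S₂ := Real.sqrt (1 - C₂^2) with hS₂def
  have hS₁ : 0 < S₁ := sqrt_pos_of_bd hC₁m hC₁p
  have hS₂ : 0 < S₂ := sqrt_pos_of_bd hC₂m hC₂p
  have hS₁sq : S₁^2 = 1 - C₁^2 := sq_sqrt_of_bd hC₁m hC₁p
  have hS₂sq : S₂^2 = 1 - C₂^2 := sq_sqrt_of_bd hC₂m hC₂p
  set F₁ := (d₁^2 - R^2 - r₁^2)/(2*R*r₁) with hF₁def
  set F₂ := (d₂^2 - R^2 - r₂^2)/(2*R*r₂) with hF₂def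
  obtain ⟨hF₁m, hF₁p⟩ := bndF R r₁ d₁ hR hr₁ hd₁ h1l h1l' h1u
  obtain ⟨hF₂m, hF₂p⟩ := bndF R r₂ d₂ hR hr₂ hd₂ h2l h2l' h2u
  set s₁ := Real.sqrt (1 - F₁^2) with hs₁def
  set s₂ := Real.sqrt (1 - F₂^2) with hs₂def
  have hs₁ : 0 < s₁ := sqrt_pos_of_bd hF₁m hF₁p
  have hs₂ : 0 < s₂ := sqrt_pos_of_bd hF₂m hF₂p
  -- the radius/half-chord identity  r·s = d·S
  have hrs₁ : r₁ * s₁ = d₁ * S₁ := by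
    rw [hs₁def, hS₁def, ← Real.sqrt_sq hr₁.le, ← Real.sqrt_sq hd₁.le,
      ← Real.sqrt_mul (by positivity), ← Real.sqrt_mul (by positivity)]
    congr 1
    rw [hF₁def, hC₁def]
    field_simp
    ring
  have hrs₂ : r₂ * s₂ = d₂ * S₂ := by
    rw [hs₂def, hS₂def, ← Real.sqrt_sq hr₂.le, ← Real.sqrt_sq hd₂.le,
      ← Real.sqrt_mul (by positivity), ← Real.sqrt_mul (by positivity)]
    congr 1
    rw [hF₂def, hC₂def]
    field_simp
    ring
  -- Cauchy–Schwarz step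
  set w : ℂ := (S₂:ℂ) * e₁ + (S₁:ℂ) * e₂ with hwdef
  set p := dot e₁ e₂ with hpdef
  have hwsq : ‖w‖ ^ 2 = S₂^2 + S₁^2 + 2*S₁*S₂*p := by
    rw [abs_sq, hwdef]
    have h1 : dot ((S₂:ℂ) * e₁ + (S₁:ℂ) * e₂) ((S₂:ℂ) * e₁ + (S₁:ℂ) * e₂)
        = S₂^2 * dot e₁ e₁ + 2*S₁*S₂*dot e₁ e₂ + S₁^2 * dot e₂ e₂ := by
      simp only [dot, Complex.add_re, Complex.add_im, Complex.mul_re, Complex.mul_im,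
        Complex.ofReal_re, Complex.ofReal_im]
      ring
    rw [h1, ← abs_sq, ← abs_sq, he₁, he₂, ← hpdef]
    ring
  have hwu : dot w u = S₂ * dot e₁ u + S₁ * dot e₂ u := by
    rw [hwdef]
    simp only [dot, Complex.add_re, Complex.add_im, Complex.mul_re, Complex.mul_im,
      Complex.ofReal_re, Complex.ofReal_im]
    ring
  have hT : S₂ * dot e₁ u + S₁ * dot e₂ u < (C₁*S₂ + C₂*S₁) * ρ := by
    rw [← hwu]
    exact cs_step S₁ S₂ C₁ C₂ p (‖w‖) (‖u‖) ρ (dot w u) hS₁ hS₂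
      hS₁sq hS₂sq hA hK hwsq (norm_nonneg w) (dot_le w u) (norm_nonneg u) hu
  -- rewrite the goal
  have hdc₁ : dot (c - a₁) u = -(d₁ * dot e₁ u) := by
    have : c - a₁ = -((d₁:ℂ) * e₁) := by rw [← hea₁]; ring
    rw [this]
    have : dot (-((d₁:ℂ) * e₁)) u = -(dot ((d₁:ℂ) * e₁) u) := by
      simp only [dot, Complex.neg_re, Complex.neg_im]; ring
    rw [this, dot_real_mul]
  have hdc₂ : dot (c - a₂) u = -(d₂ * dot e₂ u) := by
    have : c - a₂ = -((d₂:ℂ) * e₂) := by rw [← hea₂]; ring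
    rw [this]
    have : dot (-((d₂:ℂ) * e₂)) u = -(dot ((d₂:ℂ) * e₂) u) := by
      simp only [dot, Complex.neg_re, Complex.neg_im]; ring
    rw [this, dot_real_mul]
  have hA₁ : d₁^2 + R^2 - r₁^2 = 2*R*d₁*C₁ := by
    rw [hC₁def]; field_simp
  have hA₂ : d₂^2 + R^2 - r₂^2 = 2*R*d₂*C₂ := by
    rw [hC₂def]; field_simp
  have hs₁eq : s₁ = d₁ * S₁ / r₁ := by
    field_simp
    linarith [hrs₁]
  have hs₂eq : s₂ = d₂ * S₂ / r₂ := by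
    field_simp
    linarith [hrs₂]
  have hgoal : (2*R*dot (c - a₁) u + ρ*(d₁^2 + R^2 - r₁^2)) / (2*r₁*R^2) * s₂
      + (2*R*dot (c - a₂) u + ρ*(d₂^2 + R^2 - r₂^2)) / (2*r₂*R^2) * s₁
      = d₁*d₂*((C₁*S₂ + C₂*S₁)*ρ - (S₂ * dot e₁ u + S₁ * dot e₂ u))/(r₁*r₂*R) := by
    rw [hdc₁, hdc₂, hA₁, hA₂, hs₁eq, hs₂eq]
    field_simp
    ring
  rw [hgoal]
  apply div_pos
  · have : 0 < (C₁*S₂ + C₂*S₁)*ρ - (S₂ * dot e₁ u + S₁ * dot e₂ u) := by linarith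
    exact mul_pos (mul_pos hd₁ hd₂) this
  · positivity

set_option maxHeartbeats 1000000 in
lemma hasDerivAt_F (cD a u : ℂ) (rD ρ r : ℝ) (t : ℝ) (hR : rD - t*ρ ≠ 0) (hr : r ≠ 0) :
    HasDerivAt (fun s : ℝ => (dist (cD + (s:ℂ)*u) a^2 - (rD - s*ρ)^2 - r^2)/(2*(rD - s*ρ)*r))
      ((2*(rD - t*ρ)*dot (cD + (t:ℂ)*u - a) u
        + ρ*(dist (cD + (t:ℂ)*u) a^2 + (rD - t*ρ)^2 - r^2))/(2*r*(rD - t*ρ)^2)) t := by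
  have hdist : ∀ s : ℝ, dist (cD + (s:ℂ)*u) a^2
      = ((cD.re - a.re)^2 + (cD.im - a.im)^2)
        + 2*s*((cD.re - a.re)*u.re + (cD.im - a.im)*u.im) + s^2*(u.re^2 + u.im^2) := by
    intro s
    rw [Complex.dist_eq, abs_sq]
    simp only [dot, Complex.add_re, Complex.add_im, Complex.sub_re, Complex.sub_im,
      Complex.mul_re, Complex.mul_im, Complex.ofReal_re, Complex.ofReal_im]
    ring
  set A := (cD.re - a.re)^2 + (cD.im - a.im)^2 with hA
  set B := (cD.re - a.re)*u.re + (cD.im - a.im)*u.im with hB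
  set U := u.re^2 + u.im^2 with hU
  have hfun : (fun s : ℝ => (dist (cD + (s:ℂ)*u) a^2 - (rD - s*ρ)^2 - r^2)/(2*(rD - s*ρ)*r))
      = (fun s : ℝ => (A + 2*s*B + s^2*U - (rD - s*ρ)^2 - r^2)/(2*(rD - s*ρ)*r)) := by
    funext s; rw [hdist s]
  rw [hfun]
  have h1 : HasDerivAt (fun s : ℝ => rD - s*ρ) (-ρ) t := by
    simpa using ((hasDerivAt_id t).mul_const ρ).const_sub rD
  have hnum : HasDerivAt (fun s : ℝ => A + 2*s*B + s^2*U - (rD - s*ρ)^2 - r^2)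
      (2*B + 2*t*U + 2*(rD - t*ρ)*ρ) t := by
    have h2 : HasDerivAt (fun s : ℝ => A + 2*s*B + s^2*U - (rD - s*ρ)^2 - r^2)
        (0 + 2*1*B + (↑2*t^(2-1))*U - (↑2*(rD - t*ρ)^(2-1)*(-ρ)) - 0) t := by
      exact ((((hasDerivAt_const t A).add
        (((hasDerivAt_id t).const_mul 2).mul_const B)).add
        ((hasDerivAt_pow 2 t).mul_const U)).sub ((h1.pow 2))).sub (hasDerivAt_const t (r^2))
    convert h2 using 1
    norm_num
  have hden : HasDerivAt (fun s : ℝ => 2*(rD - s*ρ)*r) (2*(-ρ)*r) t :=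
    (h1.const_mul 2).mul_const r
  have hdiv := hnum.div hden (by
    intro h
    apply hR
    rcases mul_eq_zero.1 h with h' | h'
    · rcases mul_eq_zero.1 h' with h'' | h''
      · norm_num at h''
      · exact h''
    · exact absurd h' hr)
  refine hdiv.congr_deriv ?_
  rw [hdist t]
  have hdot : dot (cD + (t:ℂ)*u - a) u = B + t*U := by
    simp only [dot, hB, hU, Complex.add_re, Complex.add_im, Complex.sub_re, Complex.sub_im,
      Complex.mul_re, Complex.mul_im, Complex.ofReal_re, Complex.ofReal_im]
    ring
  rw [hdot]
  field_simp
  ring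

end MeatAux


open MeatAux in
set_option maxHeartbeats 2000000 in
/-- **Lemma (meat).**  Let `d₋₁, d₊₁, D, D̃` be closed disks in `ℂ` with `D̃` contained
in the interior of `D`, both `D` and `D̃` overlapping both `d₋₁` and `d₊₁` (with no
containments among the relevant pairs, so all angles are well-defined),
`d₋₁ ∩ d₊₁ ∩ D = ∅`, and neither `d₋₁` nor `d₊₁` contained in `D`.  Then
`∠(D̃,d₋₁) + ∠(D̃,d₊₁) < ∠(D,d₋₁) + ∠(D,d₊₁)`. -/
theorem lem_meat
    (cm cp cD cT : ℂ) (rm rp rD rT : ℝ)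
    (hrm : 0 < rm) (hrp : 0 < rp) (hrD : 0 < rD) (hrT : 0 < rT)
    -- `D̃` is contained in the interior of `D`:
    (hTD : closedBall cT rT ⊆ ball cD rD)
    -- `D` and `D̃` overlap both `d₋₁` and `d₊₁`:
    (hovDm : (ball cD rD ∩ ball cm rm).Nonempty)
    (hovDp : (ball cD rD ∩ ball cp rp).Nonempty)
    (hovTm : (ball cT rT ∩ ball cm rm).Nonempty)
    (hovTp : (ball cT rT ∩ ball cp rp).Nonempty)
    -- no containments among the relevant overlapping pairs:
    (hDm : ¬ closedBall cD rD ⊆ closedBall cm rm)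
    (hmD : ¬ closedBall cm rm ⊆ closedBall cD rD)
    (hDp : ¬ closedBall cD rD ⊆ closedBall cp rp)
    (hpD : ¬ closedBall cp rp ⊆ closedBall cD rD)
    (hTm : ¬ closedBall cT rT ⊆ closedBall cm rm)
    (hmT : ¬ closedBall cm rm ⊆ closedBall cT rT)
    (hTp : ¬ closedBall cT rT ⊆ closedBall cp rp)
    (hpT : ¬ closedBall cp rp ⊆ closedBall cT rT)
    -- `d₋₁ ∩ d₊₁ ∩ D` is empty:
    (hemp : closedBall cm rm ∩ closedBall cp rp ∩ closedBall cD rD = ∅) :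
    extAngle cT rT cm rm + extAngle cT rT cp rp
      < extAngle cD rD cm rm + extAngle cD rD cp rp := by
  set u : ℂ := cT - cD with hudef
  set ρ : ℝ := rD - rT with hρdef
  have hu_lt : ‖u‖ < ρ := by
    rcases eq_or_ne u 0 with h0 | h0
    · have hcc : cT = cD := by rw [hudef] at h0; exact sub_eq_zero.1 h0
      have hmem : (cT + (rT:ℂ)) ∈ closedBall cT rT := by
        simp only [Metric.mem_closedBall, Complex.dist_eq]
        have h : cT + (rT:ℂ) - cT = (rT:ℂ) := by ring
        rw [h, Complex.norm_real, Real.norm_eq_abs, abs_of_pos hrT]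
      have h2 := hTD hmem
      rw [Metric.mem_ball, Complex.dist_eq] at h2
      have h3 : cT + (rT:ℂ) - cD = (rT:ℂ) := by rw [hcc]; ring
      rw [h3, Complex.norm_real, Real.norm_eq_abs, abs_of_pos hrT] at h2
      rw [h0, norm_zero, hρdef]
      linarith
    · have habsu : 0 < ‖u‖ := norm_pos_iff.2 h0
      set sc : ℝ := rT / ‖u‖ with hscdef
      have hs : 0 < sc := div_pos hrT habsu
      have hmem : cT + (sc:ℂ) * u ∈ closedBall cT rT := by
        simp only [Metric.mem_closedBall, Complex.dist_eq]
        have h : cT + (sc:ℂ)*u - cT = (sc:ℂ)*u := by ring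
        rw [h, norm_mul, Complex.norm_real, Real.norm_eq_abs, abs_of_pos hs, hscdef,
          div_mul_cancel₀ _ habsu.ne']
      have h2 := hTD hmem
      rw [Metric.mem_ball, Complex.dist_eq] at h2
      have h3 : cT + (sc:ℂ)*u - cD = ((1 + sc : ℝ):ℂ)*u := by
        rw [hudef]; push_cast; ring
      rw [h3, norm_mul, Complex.norm_real, Real.norm_eq_abs, abs_of_pos (by linarith : (0:ℝ) < 1 + sc)] at h2
      have h4 : (1+sc)*‖u‖ = ‖u‖ + rT := by
        rw [hscdef]; field_simp
      rw [h4] at h2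
      rw [hρdef]
      linarith
  have hρpos : 0 < ρ := lt_of_le_of_lt (norm_nonneg u) hu_lt
  set Fm : ℝ → ℝ :=
    fun s => (dist (cD + (s:ℂ)*u) cm^2 - (rD - s*ρ)^2 - rm^2)/(2*(rD - s*ρ)*rm) with hFmdef
  set Fp : ℝ → ℝ :=
    fun s => (dist (cD + (s:ℂ)*u) cp^2 - (rD - s*ρ)^2 - rp^2)/(2*(rD - s*ρ)*rp) with hFpdef
  set g : ℝ → ℝ := fun s => Real.arccos (Fm s) + Real.arccos (Fp s) with hgdef
  have hmain : ∀ t ∈ Set.Icc (0:ℝ) 1, ∃ G : ℝ, HasDerivAt g G t ∧ G < 0 := by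
    rintro t ⟨ht0, ht1⟩
    set c : ℂ := cD + (t:ℂ)*u with hcdef
    set R : ℝ := rD - t*ρ with hRdef
    have hR_lb : rT ≤ R := by rw [hRdef, hρdef]; nlinarith
    have hRpos : 0 < R := lt_of_lt_of_le hrT hR_lb
    have hdcT : dist c cT ≤ R - rT := by
      have h : c - cT = ((t - 1 : ℝ):ℂ)*u := by rw [hcdef, hudef]; push_cast; ring
      rw [Complex.dist_eq, h, norm_mul, Complex.norm_real, Real.norm_eq_abs, abs_of_nonpos (by linarith : t - 1 ≤ 0)]
      have : -(t-1) * ‖u‖ ≤ (1-t) * ρ := by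
        have h1 : (0:ℝ) ≤ 1 - t := by linarith
        nlinarith [norm_nonneg u]
      rw [hRdef, hρdef]
      rw [hρdef] at this
      linarith
    have hdcD : dist c cD ≤ t*ρ := by
      have h : c - cD = ((t : ℝ):ℂ)*u := by rw [hcdef]; ring
      rw [Complex.dist_eq, h, norm_mul, Complex.norm_real, Real.norm_eq_abs, abs_of_nonneg ht0]
      nlinarith [norm_nonneg u]
    have hsubT : closedBall cT rT ⊆ closedBall c R := by
      apply closedBall_subset_closedBall'
      rw [dist_comm]
      linarith
    have hsubD : closedBall c R ⊆ closedBall cD rD := by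
      apply closedBall_subset_closedBall'
      rw [hRdef]
      linarith
    have hdists : ∀ (a : ℂ) (r : ℝ), 0 < r → (ball cT rT ∩ ball a r).Nonempty →
        ¬ closedBall a r ⊆ closedBall cD rD → ¬ closedBall cT rT ⊆ closedBall a r →
        (R - r < dist c a ∧ r - R < dist c a ∧ dist c a < R + r) := by
      rintro a r hr ⟨y, hyT, hya⟩ hnotD hnotT
      rw [mem_ball] at hyT hya
      refine ⟨?_, ?_, ?_⟩
      · obtain ⟨z, hz1, hz2⟩ := Set.not_subset.1 hnotD
        rw [mem_closedBall] at hz1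
        have hz2' : rD < dist z cD := lt_of_not_ge (fun h => hz2 (mem_closedBall.2 h))
        have t1 := dist_triangle z c cD
        have t2 := dist_triangle z a c
        have e1 : dist a c = dist c a := dist_comm a c
        have e2 : dist z a ≤ r := hz1
        rw [hRdef]
        rw [e1] at t2
        linarith
      · obtain ⟨z, hz1, hz2⟩ := Set.not_subset.1 hnotT
        rw [mem_closedBall] at hz1
        have hz2' : r < dist z a := lt_of_not_ge (fun h => hz2 (mem_closedBall.2 h))
        have t1 := dist_triangle z cT c
        have t2 := dist_triangle z c a
        have e1 : dist cT c = dist c cT := dist_comm cT c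
        rw [e1] at t1
        have t3 : dist c a ≥ dist z a - dist z c := by linarith
        linarith
      · have t1 := dist_triangle c y a
        have t2 := dist_triangle c cT y
        have e1 : dist cT y = dist y cT := dist_comm cT y
        rw [e1] at t2
        linarith
    obtain ⟨hm1, hm2, hm3⟩ := hdists cm rm hrm hovTm hmD hTm
    obtain ⟨hp1, hp2, hp3⟩ := hdists cp rp hrp hovTp hpD hTp
    have H : ∀ x : ℂ, dist x c ≤ R → dist x cm ≤ rm → dist x cp ≤ rp → False := by
      intro x h1 h2 h3
      have hx : x ∈ closedBall cm rm ∩ closedBall cp rp ∩ closedBall cD rD :=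
        ⟨⟨mem_closedBall.2 h2, mem_closedBall.2 h3⟩, hsubD (mem_closedBall.2 h1)⟩
      rw [hemp] at hx
      exact hx
    have hkey := key c cm cp u R rm rp ρ hRpos hrm hrp hu_lt hm1 hm2 hm3 hp1 hp2 hp3 H
    -- bounds on Fm t, Fp t
    have hFmt : Fm t = (dist c cm^2 - R^2 - rm^2)/(2*R*rm) := rfl
    have hFpt : Fp t = (dist c cp^2 - R^2 - rp^2)/(2*R*rp) := rfl
    have hFm_lb : -1 < Fm t := by
      rw [hFmt, lt_div_iff₀ (by positivity)]; nlinarith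
    have hFm_ub : Fm t < 1 := by
      rw [hFmt, div_lt_iff₀ (by positivity)]; nlinarith
    have hFp_lb : -1 < Fp t := by
      rw [hFpt, lt_div_iff₀ (by positivity)]; nlinarith
    have hFp_ub : Fp t < 1 := by
      rw [hFpt, div_lt_iff₀ (by positivity)]; nlinarith
    -- derivatives
    have hFm' := hasDerivAt_F cD cm u rD ρ rm t hRpos.ne' hrm.ne'
    have hFp' := hasDerivAt_F cD cp u rD ρ rp t hRpos.ne' hrp.ne'
    set Gm : ℝ := (2*R*dot (c - cm) u + ρ*(dist c cm^2 + R^2 - rm^2))/(2*rm*R^2) with hGmdef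
    set Gp : ℝ := (2*R*dot (c - cp) u + ρ*(dist c cp^2 + R^2 - rp^2))/(2*rp*R^2) with hGpdef
    have hFm'' : HasDerivAt Fm Gm t := hFm'
    have hFp'' : HasDerivAt Fp Gp t := hFp'
    have harcm := (Real.hasDerivAt_arccos (ne_of_gt hFm_lb) (ne_of_lt hFm_ub)).comp t hFm''
    have harcp := (Real.hasDerivAt_arccos (ne_of_gt hFp_lb) (ne_of_lt hFp_ub)).comp t hFp''
    have hg : HasDerivAt g
        (-(1/Real.sqrt (1 - Fm t^2)) * Gm + -(1/Real.sqrt (1 - Fp t^2)) * Gp) t :=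
      harcm.add harcp
    refine ⟨_, hg, ?_⟩
    set sm : ℝ := Real.sqrt (1 - Fm t^2) with hsmdef
    set sp : ℝ := Real.sqrt (1 - Fp t^2) with hspdef
    have hsm : 0 < sm := Real.sqrt_pos.2 (by nlinarith)
    have hsp : 0 < sp := Real.sqrt_pos.2 (by nlinarith)
    have hkey' : 0 < Gm * sp + Gp * sm := by
      rw [hGmdef, hGpdef, hsmdef, hspdef, hFmt, hFpt]
      exact hkey
    have heq : -(1/sm) * Gm + -(1/sp) * Gp = -((Gm * sp + Gp * sm)/(sm*sp)) := by
      field_simp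
      ring
    rw [heq]
    have := div_pos hkey' (mul_pos hsm hsp)
    linarith
  -- conclude via strict antitonicity
  have hcont : ContinuousOn g (Set.Icc 0 1) := by
    intro x hx
    obtain ⟨G, hG, -⟩ := hmain x hx
    exact hG.continuousAt.continuousWithinAt
  have hderiv : ∀ x ∈ interior (Set.Icc (0:ℝ) 1), deriv g x < 0 := by
    intro x hx
    rw [interior_Icc] at hx
    obtain ⟨G, hG, hGneg⟩ := hmain x ⟨hx.1.le, hx.2.le⟩
    rw [hG.deriv]
    exact hGneg
  have hanti : StrictAntiOn g (Set.Icc 0 1) :=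
    strictAntiOn_of_deriv_neg (convex_Icc 0 1) hcont hderiv
  have hlt : g 1 < g 0 :=
    hanti (Set.mem_Icc.2 ⟨le_refl 0, zero_le_one⟩) (Set.mem_Icc.2 ⟨zero_le_one, le_refl 1⟩)
      zero_lt_one
  have hg0 : g 0 = extAngle cD rD cm rm + extAngle cD rD cp rp := by
    rw [hgdef]
    simp only
    have h1 : cD + ((0:ℝ):ℂ)*u = cD := by push_cast; ring
    have h2 : rD - 0*ρ = rD := by ring
    rw [hFmdef, hFpdef]
    simp only [h1, h2]
    rw [extAngle, extAngle]
  have hg1 : g 1 = extAngle cT rT cm rm + extAngle cT rT cp rp := by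
    rw [hgdef]
    simp only
    have h1 : cD + ((1:ℝ):ℂ)*u = cT := by rw [hudef]; push_cast; ring
    have h2 : rD - 1*ρ = rT := by rw [hρdef]; ring
    rw [hFmdef, hFpdef]
    simp only [h1, h2]
    rw [extAngle, extAngle]
  rw [← hg0, ← hg1]
  exact hlt
end

section
/- Let {A,B} and {Ã,B̃} be pairs of overlapping closed disks in ℂ in general position with ∠(A,B) = ∠(Ã,B̃). Suppose Ã is contained in the interior of A and B̃ is contained in the interior of B, and suppose neither Ã ⊂ B nor B̃ ⊂ A. Then 2·∠(A,B) < ∠(Ã,B) + ∠(A,B̃). -/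
open Metric Real

/-- Two circles cross transversely wherever they meet (i.e. they are not tangent
and not identical, whenever they intersect at all). -/
def CircTrans (c₁ : ℂ) (r₁ : ℝ) (c₂ : ℂ) (r₂ : ℝ) : Prop :=
  (Metric.sphere c₁ r₁ ∩ Metric.sphere c₂ r₂).Nonempty →
    dist c₁ c₂ ≠ r₁ + r₂ ∧ dist c₁ c₂ ≠ |r₁ - r₂|

set_option maxHeartbeats 1000000

/-- Core scalar lemma, normalized so that `R1^2+R2^2+2*u*R1*R2 = 1`. -/
private lemma core_aux {u cb cg A1 B2 R1 R2 : ℝ}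
    (hu1 : -1 < u) (hu2 : u < 1) (hcb1 : -1 < cb) (hcb2 : cb ≤ 1)
    (hcg1 : -1 < cg) (hcg2 : cg ≤ 1) (hA1 : 1 < A1) (hB2 : 1 < B2)
    (hR1 : 0 < R1) (hR2 : 0 < R2)
    (hKone : R1^2 + R2^2 + 2*u*R1*R2 = 1)
    (hcon : (R1*A1+R2*cb)^2 + (R1*cg+R2*B2)^2 - 2*u*(R1*A1+R2*cb)*(R1*cg+R2*B2)
        = 1 - u^2) :
    2 * Real.arccos u < Real.arccos cb + Real.arccos cg := by
  have h1u2 : 0 < 1 - u^2 := by nlinarith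
  set su := Real.sqrt (1-u^2) with hsudef
  have hsu : 0 < su := Real.sqrt_pos.2 h1u2
  have hsu2 : su^2 = 1 - u^2 := Real.sq_sqrt h1u2.le
  -- strict triangle inequalities (triangle with sides 1, R1, R2)
  have htri3 : 1 < R1 + R2 := by
    nlinarith [mul_pos hR1 hR2, sq_nonneg (R1 + R2 - 1)]
  have htri1 : R1 < 1 + R2 := by
    nlinarith [mul_pos hR1 hR2, sq_nonneg (1 + R2 - R1)]
  have htri2 : R2 < 1 + R1 := by
    nlinarith [mul_pos hR1 hR2, sq_nonneg (1 + R1 - R2)]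
  set c1 := (1 + R2^2 - R1^2)/(2*R2) with hc1
  set c2 := (1 + R1^2 - R2^2)/(2*R1) with hc2
  have h2R2 : (0:ℝ) < 2*R2 := by positivity
  have h2R1 : (0:ℝ) < 2*R1 := by positivity
  have hc1lt : c1 < 1 := by
    rw [hc1, div_lt_one h2R2]; nlinarith
  have hc1gt : -1 < c1 := by
    rw [hc1, lt_div_iff₀ h2R2]; nlinarith
  have hc2lt : c2 < 1 := by
    rw [hc2, div_lt_one h2R1]; nlinarith
  have hc2gt : -1 < c2 := by
    rw [hc2, lt_div_iff₀ h2R1]; nlinarith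
  set f1 := Real.arccos c1 with hf1def
  set f2 := Real.arccos c2 with hf2def
  have hf1pos : 0 < f1 := arccos_pos.2 hc1lt
  have hf2pos : 0 < f2 := arccos_pos.2 hc2lt
  have hf1pi : f1 < π := lt_of_le_of_ne (arccos_le_pi c1)
    (by rw [Ne, hf1def, arccos_eq_pi]; intro h; linarith)
  have hf2pi : f2 < π := lt_of_le_of_ne (arccos_le_pi c2)
    (by rw [Ne, hf2def, arccos_eq_pi]; intro h; linarith)
  have hcosf1 : Real.cos f1 = c1 := cos_arccos hc1gt.le hc1lt.le
  have hcosf2 : Real.cos f2 = c2 := cos_arccos hc2gt.le hc2lt.le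
  have hsinf1 : Real.sin f1 = R1 * su := by
    rw [hf1def, sin_arccos,
      show 1 - c1^2 = (R1*su)^2 by
        rw [hc1]; field_simp
        linear_combination (-4*R1^2*R2^2)*hsu2 + (1 + 2*u*R1*R2 - R1^2 - R2^2)*hKone]
    exact Real.sqrt_sq (by positivity)
  have hsinf2 : Real.sin f2 = R2 * su := by
    rw [hf2def, sin_arccos,
      show 1 - c2^2 = (R2*su)^2 by
        rw [hc2]; field_simp
        linear_combination (-4*R1^2*R2^2)*hsu2 + (1 + 2*u*R1*R2 - R1^2 - R2^2)*hKone]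
    exact Real.sqrt_sq (by positivity)
  set a := Real.arccos u with hadef
  have hapos : 0 < a := arccos_pos.2 hu2
  have hapi : a < π := lt_of_le_of_ne (arccos_le_pi u)
    (by rw [Ne, hadef, arccos_eq_pi]; intro h; linarith)
  have hcosa : Real.cos a = u := cos_arccos hu1.le hu2.le
  have hsina : Real.sin a = su := by rw [hadef, sin_arccos, hsudef]
  -- f1 + f2 = a
  have hcos12 : Real.cos (f1 + f2) = u := by
    rw [Real.cos_add, hcosf1, hcosf2, hsinf1, hsinf2, hc1, hc2]
    field_simp
    linear_combination (-4*R1^2*R2^2) * hsu2 + (2*u*R1*R2 - R1^2 - R2^2 - 1) * hKone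
  have hsin12 : Real.sin (f1 + f2) = su := by
    rw [Real.sin_add, hcosf1, hcosf2, hsinf1, hsinf2, hc1, hc2]
    field_simp
    ring
  have hsumpi : f1 + f2 < π := by
    by_contra hge
    push_neg at hge
    have h1 : (0:ℝ) ≤ Real.sin (f1 + f2 - π) :=
      sin_nonneg_of_nonneg_of_le_pi (by linarith) (by linarith)
    rw [Real.sin_sub_pi, hsin12] at h1
    linarith
  have hsum : f1 + f2 = a := by
    apply injOn_cos ⟨by linarith, hsumpi.le⟩ ⟨arccos_nonneg u, arccos_le_pi u⟩
    rw [hcos12, hcosa]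
  -- construct θ
  set P := R1*A1+R2*cb with hP
  set Q := R1*cg+R2*B2 with hQ
  have hPuQ : (1-u^2)*(1-Q^2) = (P - u*Q)^2 := by linear_combination -hcon
  have hQ1 : Q^2 ≤ 1 := by
    by_contra hq
    push_neg at hq
    have h6 : 1 - Q^2 < 0 := by linarith
    have h7 : (1-u^2)*(1-Q^2) < 0 := mul_neg_of_pos_of_neg h1u2 h6
    have h8 := sq_nonneg (P - u*Q)
    linarith [hPuQ]
  have hQabs := abs_le_of_sq_le_sq' (by linarith [hQ1] : Q^2 ≤ (1:ℝ)^2) (by norm_num)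
  have hQk1 : (-1:ℝ) ≤ Q := hQabs.1
  have hQk2 : Q ≤ 1 := hQabs.2
  set ψ := Real.arccos Q with hψdef
  have hψ1 : 0 ≤ ψ := arccos_nonneg _
  have hψ2 : ψ ≤ π := arccos_le_pi _
  have hcosψ : Real.cos ψ = Q := cos_arccos hQk1 hQk2
  have hsinψ : Real.sin ψ = Real.sqrt (1 - Q^2) := by rw [hψdef, sin_arccos]
  have hsqrtmul : su * Real.sqrt (1 - Q^2) = Real.sqrt ((1-u^2)*(1-Q^2)) :=
    (Real.sqrt_mul h1u2.le _).symm
  obtain ⟨θ, hθP, hθQ, hθlo, hθhi⟩ :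
      ∃ θ : ℝ, Real.cos θ = P ∧ Real.cos (θ - a) = Q ∧ a - π ≤ θ ∧ θ ≤ a + π := by
    rcases le_or_gt 0 (P - u*Q) with hcase | hcase
    · refine ⟨a - ψ, ?_, ?_, by linarith, by linarith⟩
      · have h1 : su * Real.sqrt (1-Q^2) = P - u*Q := by
          rw [hsqrtmul, hPuQ, Real.sqrt_sq hcase]
        rw [Real.cos_sub, hcosa, hsina, hcosψ, hsinψ]
        linarith [h1]
      · rw [show a - ψ - a = -ψ by ring, Real.cos_neg, hcosψ]
    · refine ⟨a + ψ, ?_, ?_, by linarith, by linarith⟩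
      · have h1 : su * Real.sqrt (1-Q^2) = u*Q - P := by
          rw [hsqrtmul, hPuQ, show (P - u*Q)^2 = (u*Q - P)^2 by ring,
            Real.sqrt_sq (by linarith)]
        rw [Real.cos_add, hcosa, hsina, hcosψ, hsinψ]
        linarith [h1]
      · rw [show a + ψ - a = ψ by ring, hcosψ]
  -- feasibility
  have he1 : R1 * 1 < R1 * A1 := mul_lt_mul_of_pos_left hA1 hR1
  have he2 : R2 * (-1) < R2 * cb := mul_lt_mul_of_pos_left hcb1 hR2
  have he3 : R2 * 1 < R2 * B2 := mul_lt_mul_of_pos_left hB2 hR2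
  have he4 : R1 * (-1) < R1 * cg := mul_lt_mul_of_pos_left hcg1 hR1
  have hPgt : R1 - R2 < Real.cos θ := by rw [hθP, hP]; linarith
  have hQgt : R2 - R1 < Real.cos (θ - a) := by rw [hθQ, hQ]; linarith
  -- G1 : θ + f1 ≤ π
  have hG1 : θ + f1 ≤ π := by
    by_contra hgt
    push_neg at hgt
    rcases le_or_gt θ (π + f1) with hsub | hsub
    · have hcc : Real.cos θ ≤ -c1 := by
        have hid := Real.cos_add_cos θ f1
        have h1 : Real.cos ((θ+f1)/2) ≤ 0 :=
          Real.cos_nonpos_of_pi_div_two_le_of_le (by linarith) (by linarith)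
        have h2 : 0 ≤ Real.cos ((θ-f1)/2) :=
          Real.cos_nonneg_of_mem_Icc ⟨by linarith, by linarith⟩
        have h3 : Real.cos ((θ+f1)/2) * Real.cos ((θ-f1)/2) ≤ 0 :=
          mul_nonpos_iff.2 (Or.inr ⟨h1, h2⟩)
        linarith [hid, hcosf1]
      have h4 : c1 < R2 - R1 := by linarith [hPgt, hcc]
      rw [hc1, div_lt_iff₀ h2R2] at h4
      have h8 : (R2 - R1)*(2*R2) = 2*R2^2 - 2*R1*R2 := by ring
      have h7 : (-1) * (R1*R2) < u * (R1*R2) :=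
        mul_lt_mul_of_pos_right hu1 (mul_pos hR1 hR2)
      have h9 : u * (R1*R2) = u*R1*R2 := by ring
      linarith [hKone]
    · have hta1 : π - f2 < θ - a := by
        have h5 : a = f1 + f2 := hsum.symm
        linarith
      have hta2 : θ - a ≤ π := by linarith
      have hcc : Real.cos (θ-a) ≤ -c2 := by
        have hid := Real.cos_add_cos (θ-a) f2
        have h1 : Real.cos ((θ-a+f2)/2) ≤ 0 :=
          Real.cos_nonpos_of_pi_div_two_le_of_le (by linarith) (by linarith)
        have h2 : 0 ≤ Real.cos ((θ-a-f2)/2) :=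
          Real.cos_nonneg_of_mem_Icc ⟨by linarith, by linarith⟩
        have h3 : Real.cos ((θ-a+f2)/2) * Real.cos ((θ-a-f2)/2) ≤ 0 :=
          mul_nonpos_iff.2 (Or.inr ⟨h1, h2⟩)
        linarith [hid, hcosf2]
      have h4 : c2 < R1 - R2 := by linarith [hQgt, hcc]
      rw [hc2, div_lt_iff₀ h2R1] at h4
      have h8 : (R1 - R2)*(2*R1) = 2*R1^2 - 2*R1*R2 := by ring
      have h7 : (-1) * (R1*R2) < u * (R1*R2) :=
        mul_lt_mul_of_pos_right hu1 (mul_pos hR1 hR2)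
      have h9 : u * (R1*R2) = u*R1*R2 := by ring
      linarith [hKone]
  -- G2 : a - θ + f2 ≤ π
  have hG2 : a - θ + f2 ≤ π := by
    by_contra hgt
    push_neg at hgt
    have hta2 : a - θ ≤ π := by linarith
    have hcc : Real.cos (θ-a) ≤ -c2 := by
      have hceq : Real.cos (θ-a) = Real.cos (a-θ) := by
        rw [← Real.cos_neg (a-θ)]; ring_nf
      rw [hceq]
      have hid := Real.cos_add_cos (a-θ) f2
      have h1 : Real.cos ((a-θ+f2)/2) ≤ 0 :=
        Real.cos_nonpos_of_pi_div_two_le_of_le (by linarith) (by linarith)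
      have h2 : 0 ≤ Real.cos ((a-θ-f2)/2) :=
        Real.cos_nonneg_of_mem_Icc ⟨by linarith, by linarith⟩
      have h3 : Real.cos ((a-θ+f2)/2) * Real.cos ((a-θ-f2)/2) ≤ 0 :=
        mul_nonpos_iff.2 (Or.inr ⟨h1, h2⟩)
      linarith [hid, hcosf2]
    have h4 : c2 < R1 - R2 := by linarith [hQgt, hcc]
    rw [hc2, div_lt_iff₀ h2R1] at h4
    have h8 : (R1 - R2)*(2*R1) = 2*R1^2 - 2*R1*R2 := by ring
    have h7 : (-1) * (R1*R2) < u * (R1*R2) :=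
      mul_lt_mul_of_pos_right hu1 (mul_pos hR1 hR2)
    have h9 : u * (R1*R2) = u*R1*R2 := by ring
    linarith [hKone]
  -- E bounds
  have hE1 : Real.cos θ - R1 ≤ R2 * Real.cos (θ + f1) := by
    have hid : R2 * Real.cos (θ + f1) - Real.cos θ + R1
        = R1 * (1 - Real.cos (θ - f2)) := by
      rw [Real.cos_add, Real.cos_sub, hcosf1, hsinf1, hcosf2, hsinf2, hc1, hc2]
      field_simp
      ring
    have h9 : 0 ≤ R1 * (1 - Real.cos (θ - f2)) :=
      mul_nonneg hR1.le (by linarith [Real.cos_le_one (θ - f2)])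
    linarith [hid]
  have hE2 : Real.cos (θ - a) - R2 ≤ R1 * Real.cos (a - θ + f2) := by
    have hceq : Real.cos (θ-a) = Real.cos (a-θ) := by
      rw [← Real.cos_neg (a-θ)]; ring_nf
    have hid : ∀ b : ℝ, R1 * Real.cos (b + f2) - Real.cos b + R2
        = R2 * (1 - Real.cos (b - f1)) := by
      intro b
      rw [Real.cos_add, Real.cos_sub, hcosf1, hsinf1, hcosf2, hsinf2, hc1, hc2]
      field_simp
      ring
    have h9 : 0 ≤ R2 * (1 - Real.cos (a - θ - f1)) :=
      mul_nonneg hR2.le (by linarith [Real.cos_le_one (a - θ - f1)])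
    rw [hceq]
    linarith [hid (a - θ)]
  -- conclude
  have hb : θ + f1 < Real.arccos cb := by
    have hcblt : cb < Real.cos (θ + f1) := by
      have h1 : R2 * cb < R2 * Real.cos (θ + f1) := by
        linarith [hE1, hθP, he1]
      exact lt_of_mul_lt_mul_left h1 hR2.le
    rcases le_or_gt 0 (θ + f1) with hpos | hneg
    · have h2 : Real.arccos (Real.cos (θ + f1)) < Real.arccos cb :=
        strictAntiOn_arccos ⟨hcb1.le, hcb2⟩
          ⟨Real.neg_one_le_cos _, Real.cos_le_one _⟩ hcblt
      rwa [arccos_cos hpos hG1] at h2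
    · exact lt_of_lt_of_le hneg (arccos_nonneg cb)
  have hg : a - θ + f2 < Real.arccos cg := by
    have hcglt : cg < Real.cos (a - θ + f2) := by
      have h1 : R1 * cg < R1 * Real.cos (a - θ + f2) := by
        linarith [hE2, hθQ, he3]
      exact lt_of_mul_lt_mul_left h1 hR1.le
    rcases le_or_gt 0 (a - θ + f2) with hpos | hneg
    · have h2 : Real.arccos (Real.cos (a - θ + f2)) < Real.arccos cg :=
        strictAntiOn_arccos ⟨hcg1.le, hcg2⟩
          ⟨Real.neg_one_le_cos _, Real.cos_le_one _⟩ hcglt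
      rwa [arccos_cos hpos hG2] at h2
    · exact lt_of_lt_of_le hneg (arccos_nonneg cg)
  have h5 : a = f1 + f2 := hsum.symm
  linarith

/-- Unnormalized core lemma. -/
private lemma core_lemma {u cb cg A1 B2 R1 R2 : ℝ}
    (hu1 : -1 < u) (hu2 : u < 1) (hcb1 : -1 < cb) (hcb2 : cb ≤ 1)
    (hcg1 : -1 < cg) (hcg2 : cg ≤ 1) (hA1 : 1 < A1) (hB2 : 1 < B2)
    (hR1 : 0 < R1) (hR2 : 0 < R2)
    (hcon : (R1*A1+R2*cb)^2 + (R1*cg+R2*B2)^2 - 2*u*(R1*A1+R2*cb)*(R1*cg+R2*B2)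
        = (1 - u^2)*(R1^2+R2^2+2*u*R1*R2)) :
    2 * Real.arccos u < Real.arccos cb + Real.arccos cg := by
  have hKpos : 0 < R1^2+R2^2+2*u*R1*R2 := by nlinarith [mul_pos hR1 hR2, sq_nonneg (R1-R2)]
  set k := Real.sqrt (R1^2+R2^2+2*u*R1*R2) with hk
  have hkpos : 0 < k := Real.sqrt_pos.2 hKpos
  have hk2 : k^2 = R1^2+R2^2+2*u*R1*R2 := Real.sq_sqrt hKpos.le
  apply core_aux hu1 hu2 hcb1 hcb2 hcg1 hcg2 hA1 hB2
    (show 0 < R1/k by positivity) (show 0 < R2/k by positivity)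
  · have e : (R1/k)^2 + (R2/k)^2 + 2*u*(R1/k)*(R2/k)
        = (R1^2+R2^2+2*u*R1*R2)/k^2 := by ring
    rw [e, hk2, div_self hKpos.ne']
  · have e : ((R1/k)*A1+(R2/k)*cb)^2 + ((R1/k)*cg+(R2/k)*B2)^2
        - 2*u*((R1/k)*A1+(R2/k)*cb)*((R1/k)*cg+(R2/k)*B2)
        = ((R1*A1+R2*cb)^2 + (R1*cg+R2*B2)^2
            - 2*u*(R1*A1+R2*cb)*(R1*cg+R2*B2))/k^2 := by ring
    rw [e, hcon, hk2, mul_div_assoc, div_self hKpos.ne', mul_one]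

/-- Bridge: the key constraint from coordinates (relative to the point `p` on both
primed circles). -/
private lemma bridge {aX aY bX bY cX cY dX dY rA rB rA' rB' : ℝ}
    (hrA : 0 < rA) (hrB : 0 < rB) (hrA' : 0 < rA') (hrB' : 0 < rB')
    (e1 : cX^2 + cY^2 = rA'^2) (e2 : dX^2 + dY^2 = rB'^2)
    (hM1 : aX^2 + aY^2 < rA^2) (hM2 : bX^2 + bY^2 < rB^2)
    {u1 u2 cb cg A1 B2 : ℝ}
    (hu1 : u1 = ((aX-bX)^2+(aY-bY)^2 - rA^2 - rB^2)/(2*rA*rB))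
    (hu2 : u2 = ((cX-dX)^2+(cY-dY)^2 - rA'^2 - rB'^2)/(2*rA'*rB'))
    (hcb : cb = ((cX-bX)^2+(cY-bY)^2 - rA'^2 - rB^2)/(2*rA'*rB))
    (hcg : cg = ((aX-dX)^2+(aY-dY)^2 - rA^2 - rB'^2)/(2*rA*rB'))
    (hA1 : A1 = (rA^2 + rA'^2 - ((aX-cX)^2+(aY-cY)^2))/(2*rA*rA'))
    (hB2 : B2 = (rB^2 + rB'^2 - ((bX-dX)^2+(bY-dY)^2))/(2*rB*rB')) :
    ∃ R1 R2 : ℝ, 0 < R1 ∧ 0 < R2 ∧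
      (R1*A1+R2*cb)^2 + (R1*cg+R2*B2)^2 - 2*u2*(R1*A1+R2*cb)*(R1*cg+R2*B2)
        = (1 - u2^2)*(R1^2+R2^2+2*u1*R1*R2) := by
  have hN1pos : 0 < rA^2 - (aX^2+aY^2) := by linarith
  have hN2pos : 0 < rB^2 - (bX^2+bY^2) := by linarith
  have hN1ne : rA^2 - (aX^2+aY^2) ≠ 0 := hN1pos.ne'
  have hN2ne : rB^2 - (bX^2+bY^2) ≠ 0 := hN2pos.ne'
  refine ⟨rA/(rA^2 - (aX^2+aY^2)), rB/(rB^2 - (bX^2+bY^2)),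
    by positivity, by positivity, ?_⟩
  set R1 := rA/(rA^2 - (aX^2+aY^2)) with hR1
  set R2 := rB/(rB^2 - (bX^2+bY^2)) with hR2
  set SX := bX/(rB^2 - (bX^2+bY^2)) - aX/(rA^2 - (aX^2+aY^2)) with hSX
  set SY := bY/(rB^2 - (bX^2+bY^2)) - aY/(rA^2 - (aX^2+aY^2)) with hSY
  have h1 : SX^2 + SY^2 = R1^2+R2^2+2*u1*R1*R2 := by
    rw [hSX, hSY, hR1, hR2, hu1]
    field_simp
    ring
  have hs1 : SX*cX + SY*cY = -(R1*A1 + R2*cb) * rA' := by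
    rw [hSX, hSY, hR1, hR2, hA1, hcb, ← e1]
    field_simp
    ring
  have hs2 : SX*dX + SY*dY = (R1*cg + R2*B2) * rB' := by
    rw [hSX, hSY, hR1, hR2, hcg, hB2, ← e2]
    field_simp
    ring
  have hn : cX*dX + cY*dY = -u2 * rA' * rB' := by
    rw [hu2, ← e1, ← e2]
    field_simp
    ring
  have hLag : (SX*cX+SY*cY)^2 * (dX^2+dY^2) + (SX*dX+SY*dY)^2 * (cX^2+cY^2)
      - 2*(cX*dX+cY*dY)*(SX*cX+SY*cY)*(SX*dX+SY*dY)
      = ((cX^2+cY^2)*(dX^2+dY^2) - (cX*dX+cY*dY)^2) * (SX^2+SY^2) := by ring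
  rw [hs1, hs2, hn, e1, e2, h1] at hLag
  have key : ((R1*A1+R2*cb)^2 + (R1*cg+R2*B2)^2
      - 2*u2*(R1*A1+R2*cb)*(R1*cg+R2*B2)) * (rA'^2*rB'^2)
      = ((1 - u2^2)*(R1^2+R2^2+2*u1*R1*R2)) * (rA'^2*rB'^2) := by
    linear_combination hLag
  exact mul_right_cancel₀ (by positivity) key

private lemma ball_inter_dist {c₁ c₂ : ℂ} {r₁ r₂ : ℝ}
    (h : (ball c₁ r₁ ∩ ball c₂ r₂).Nonempty) : dist c₁ c₂ < r₁ + r₂ := by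
  obtain ⟨x, hx1, hx2⟩ := h
  rw [mem_ball] at hx1 hx2
  have := dist_triangle c₁ x c₂
  rw [dist_comm c₁ x] at this
  linarith

private lemma closedBall_sub_ball_dist {c c' : ℂ} {r r' : ℝ} (hr' : 0 < r')
    (h : closedBall c' r' ⊆ ball c r) : dist c' c + r' < r := by
  rcases eq_or_ne c' c with rfl | hne
  · have hz : c' + (r' : ℂ) ∈ closedBall c' r' := by
      rw [mem_closedBall, Complex.dist_eq]
      simp [Complex.norm_real, abs_of_pos hr']
    have := h hz
    rw [mem_ball, Complex.dist_eq] at this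
    simp [Complex.norm_real, abs_of_pos hr'] at this
    simpa using by linarith [this]
  · set d := dist c' c with hd
    have hd0 : 0 < d := dist_pos.2 hne
    have hdC : (d:ℂ) ≠ 0 := by exact_mod_cast hd0.ne'
    set z := c' + (r'/d : ℝ) * (c' - c) with hz
    have hz1 : dist z c' = r' := by
      rw [Complex.dist_eq, show z - c' = (r'/d : ℝ) * (c' - c) by rw [hz]; ring,
        norm_mul, Complex.norm_real, Real.norm_eq_abs, ← Complex.dist_eq, hd]
      rw [abs_of_pos (by positivity)]
      field_simp
      rw [← hd]; field_simp [hd0.ne']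
    have hz2 : dist z c = d + r' := by
      rw [Complex.dist_eq, show z - c = ((1 + r'/d : ℝ) : ℂ) * (c' - c) by
        rw [hz]; push_cast; ring, norm_mul, Complex.norm_real, Real.norm_eq_abs, ← Complex.dist_eq, hd]
      rw [abs_of_pos (by positivity)]
      field_simp
      rw [← hd]; field_simp [hd0.ne']
    have := h (by rw [mem_closedBall, hz1])
    rw [mem_ball, hz2] at this
    linarith

private lemma not_subset_dist {c c' : ℂ} {r r' : ℝ}
    (h : ¬ closedBall c' r' ⊆ closedBall c r) : r < dist c' c + r' := by
  by_contra hle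
  push_neg at hle
  exact h (closedBall_subset_closedBall' (by linarith))

private lemma circles_intersect {c₁ c₂ : ℂ} {r₁ r₂ : ℝ} (h₁ : 0 < r₁) (h₂ : 0 < r₂)
    (hlt : dist c₁ c₂ < r₁ + r₂) (hgt₁ : r₁ - r₂ < dist c₁ c₂)
    (hgt₂ : r₂ - r₁ < dist c₁ c₂) :
    ∃ p : ℂ, dist p c₁ = r₁ ∧ dist p c₂ = r₂ := by
  set d := dist c₁ c₂ with hd
  have hdnn : 0 ≤ d := dist_nonneg
  have hd0 : 0 < d := by
    rcases hdnn.lt_or_eq with h | h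
    · exact h
    · exfalso; rw [← h] at hgt₁ hgt₂; linarith
  have hdC : (d:ℂ) ≠ 0 := by exact_mod_cast hd0.ne'
  set x := (d^2 + r₁^2 - r₂^2)/(2*d) with hx
  have hy2 : 0 ≤ r₁^2 - x^2 := by
    have key : r₁^2 - x^2 = ((d+r₁)^2 - r₂^2)*(r₂^2-(d-r₁)^2)/(2*d)^2 := by
      rw [hx]; field_simp; ring
    rw [key]
    have p1 : 0 < (d+r₁)^2 - r₂^2 := by nlinarith
    have p2 : 0 < r₂^2-(d-r₁)^2 := by nlinarith
    positivity
  set y := Real.sqrt (r₁^2 - x^2) with hy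
  have hxy : x^2 + y^2 = r₁^2 := by rw [hy, Real.sq_sqrt hy2]; ring
  have hxd : x*(2*d) = d^2+r₁^2-r₂^2 := by rw [hx]; field_simp
  have hxy2 : (x-d)^2 + y^2 = r₂^2 := by linear_combination hxy - hxd
  have habs2 : ‖c₂ - c₁‖ = d := by
    rw [← Complex.dist_eq, dist_comm c₂ c₁, hd]
  refine ⟨c₁ + ((x:ℂ) + (y:ℂ)*Complex.I) * (c₂ - c₁) / (d:ℂ), ?_, ?_⟩
  · rw [Complex.dist_eq,
      show c₁ + ((x:ℂ) + (y:ℂ)*Complex.I) * (c₂ - c₁) / (d:ℂ) - c₁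
        = ((x:ℂ) + (y:ℂ)*Complex.I) * (c₂ - c₁) / (d:ℂ) by ring,
      norm_div, norm_mul, Complex.norm_real, Real.norm_eq_abs, habs2,
      Complex.norm_def, Complex.normSq_add_mul_I, hxy,
      Real.sqrt_sq h₁.le, abs_of_pos hd0]
    field_simp
  · rw [Complex.dist_eq,
      show c₁ + ((x:ℂ) + (y:ℂ)*Complex.I) * (c₂ - c₁) / (d:ℂ) - c₂
        = (((x-d:ℝ):ℂ) + (y:ℂ)*Complex.I) * (c₂ - c₁) / (d:ℂ) by
        field_simp; push_cast; ring,
      norm_div, norm_mul, Complex.norm_real, Real.norm_eq_abs, habs2,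
      Complex.norm_def, Complex.normSq_add_mul_I, hxy2,
      Real.sqrt_sq h₂.le, abs_of_pos hd0]
    field_simp

private lemma sq_dist_coord (p z w : ℂ) :
    dist z w ^ 2 = ((z-p).re - (w-p).re)^2 + ((z-p).im - (w-p).im)^2 := by
  rw [Complex.dist_eq, Complex.sq_norm, Complex.normSq_apply]
  simp only [Complex.sub_re, Complex.sub_im]
  ring

private lemma sq_dist_coord' (p z : ℂ) :
    (z-p).re^2 + (z-p).im^2 = dist z p ^ 2 := by
  rw [Complex.dist_eq, Complex.sq_norm, Complex.normSq_apply]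
  simp only [Complex.sub_re, Complex.sub_im]
  ring

/-- **Lemma (finlandia).**  Let `{A,B}` and `{Ã,B̃}` be pairs of overlapping closed
disks in `ℂ` in general position with `∠(A,B) = ∠(Ã,B̃)`.  If `Ã` is contained in the
interior of `A`, `B̃` is contained in the interior of `B`, and neither `Ã ⊆ B`
nor `B̃ ⊆ A`, then `2·∠(A,B) < ∠(Ã,B) + ∠(A,B̃)`. -/
theorem lem_finlandia
    (cA cB cA' cB' : ℂ) (rA rB rA' rB' : ℝ)
    (hrA : 0 < rA) (hrB : 0 < rB) (hrA' : 0 < rA') (hrB' : 0 < rB')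
    (hovAB : (ball cA rA ∩ ball cB rB).Nonempty)
    (hovAB' : (ball cA' rA' ∩ ball cB' rB').Nonempty)
    (htAA : CircTrans cA rA cA' rA') (htAB : CircTrans cA rA cB' rB')
    (htBA : CircTrans cB rB cA' rA') (htBB : CircTrans cB rB cB' rB')
    (hpts : ∀ z ∈ Metric.sphere cA rA ∩ Metric.sphere cB rB,
      z ∉ Metric.sphere cA' rA' ∪ Metric.sphere cB' rB')
    (hpts' : ∀ z ∈ Metric.sphere cA' rA' ∩ Metric.sphere cB' rB',
      z ∉ Metric.sphere cA rA ∪ Metric.sphere cB rB)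
    (hangle : extAngle cA rA cB rB = extAngle cA' rA' cB' rB')
    (hA'A : closedBall cA' rA' ⊆ ball cA rA)
    (hB'B : closedBall cB' rB' ⊆ ball cB rB)
    (hA'B : ¬ closedBall cA' rA' ⊆ closedBall cB rB)
    (hB'A : ¬ closedBall cB' rB' ⊆ closedBall cA rA) :
    2 * extAngle cA rA cB rB < extAngle cA' rA' cB rB + extAngle cA rA cB' rB' := by
  -- basic distance facts
  have hAB : dist cA cB < rA + rB := ball_inter_dist hovAB
  have hA'B'lt : dist cA' cB' < rA' + rB' := ball_inter_dist hovAB'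
  have hAA' : dist cA' cA + rA' < rA := closedBall_sub_ball_dist hrA' hA'A
  have hBB' : dist cB' cB + rB' < rB := closedBall_sub_ball_dist hrB' hB'B
  have hA'Bgt : rB < dist cA' cB + rA' := not_subset_dist hA'B
  have hB'Agt : rA < dist cB' cA + rB' := not_subset_dist hB'A
  have hA'Blt : dist cA' cB < rA' + rB := by
    apply ball_inter_dist
    obtain ⟨x, hx1, hx2⟩ := hovAB'
    exact ⟨x, hx1, hB'B (ball_subset_closedBall hx2)⟩
  have hAB'lt : dist cA cB' < rA + rB' := by
    apply ball_inter_dist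
    obtain ⟨x, hx1, hx2⟩ := hovAB'
    exact ⟨x, hA'A (ball_subset_closedBall hx1), hx2⟩
  have h9 : rA' - rB < dist cA' cB := by
    by_contra h
    push_neg at h
    have hsub : closedBall cB rB ⊆ closedBall cA' rA' :=
      closedBall_subset_closedBall' (by linarith [dist_comm cB cA'])
    exact hB'A fun z hz =>
      ball_subset_closedBall (hA'A (hsub (ball_subset_closedBall (hB'B hz))))
  have h10 : rB' - rA < dist cA cB' := by
    by_contra h
    push_neg at h
    have hsub : closedBall cA rA ⊆ closedBall cB' rB' :=
      closedBall_subset_closedBall' (by linarith)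
    exact hA'B fun z hz =>
      ball_subset_closedBall (hB'B (hsub (ball_subset_closedBall (hA'A hz))))
  have h11a : rA - rB < dist cA cB := by
    by_contra h
    push_neg at h
    have hsub : closedBall cB rB ⊆ closedBall cA rA :=
      closedBall_subset_closedBall' (by linarith [dist_comm cB cA])
    exact hB'A fun z hz => hsub (ball_subset_closedBall (hB'B hz))
  have h11b : rB - rA < dist cA cB := by
    by_contra h
    push_neg at h
    have hsub : closedBall cA rA ⊆ closedBall cB rB :=
      closedBall_subset_closedBall' (by linarith)
    exact hA'B fun z hz => hsub (ball_subset_closedBall (hA'A hz))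
  have h12a : rA' - rB' < dist cA' cB' := by
    by_contra h
    push_neg at h
    have hsub : closedBall cB' rB' ⊆ closedBall cA' rA' :=
      closedBall_subset_closedBall' (by linarith [dist_comm cB' cA'])
    exact hB'A fun z hz => ball_subset_closedBall (hA'A (hsub hz))
  have h12b : rB' - rA' < dist cA' cB' := by
    by_contra h
    push_neg at h
    have hsub : closedBall cA' rA' ⊆ closedBall cB' rB' :=
      closedBall_subset_closedBall' (by linarith)
    exact hA'B fun z hz => ball_subset_closedBall (hB'B (hsub hz))
  -- intersection point of the primed circles
  obtain ⟨p, hp1, hp2⟩ := circles_intersect hrA' hrB' hA'B'lt h12a h12b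
  have hpA : dist p cA < rA := by
    have h1 : p ∈ closedBall cA' rA' := by rw [mem_closedBall]; exact le_of_eq hp1
    have h2 := hA'A h1
    rwa [mem_ball] at h2
  have hpB : dist p cB < rB := by
    have h1 : p ∈ closedBall cB' rB' := by rw [mem_closedBall]; exact le_of_eq hp2
    have h2 := hB'B h1
    rwa [mem_ball] at h2
  -- scalar quantities
  simp only [extAngle] at hangle ⊢
  set u1 := (dist cA cB ^ 2 - rA ^ 2 - rB ^ 2) / (2 * rA * rB) with hu1d
  set u2 := (dist cA' cB' ^ 2 - rA' ^ 2 - rB' ^ 2) / (2 * rA' * rB') with hu2d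
  set cb := (dist cA' cB ^ 2 - rA' ^ 2 - rB ^ 2) / (2 * rA' * rB) with hcbd
  set cg := (dist cA cB' ^ 2 - rA ^ 2 - rB' ^ 2) / (2 * rA * rB') with hcgd
  set A1 := (rA^2 + rA'^2 - dist cA cA' ^ 2)/(2*rA*rA') with hA1d
  set B2 := (rB^2 + rB'^2 - dist cB cB' ^ 2)/(2*rB*rB') with hB2d
  -- bounds
  have hdAB : 0 ≤ dist cA cB := dist_nonneg
  have hdA'B' : 0 ≤ dist cA' cB' := dist_nonneg
  have hdA'B : 0 ≤ dist cA' cB := dist_nonneg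
  have hdAB' : 0 ≤ dist cA cB' := dist_nonneg
  have hdAA' : 0 ≤ dist cA cA' := dist_nonneg
  have hdBB' : 0 ≤ dist cB cB' := dist_nonneg
  have hu1lt : u1 < 1 := by
    rw [hu1d, div_lt_one (by positivity)]
    linarith [sq_lt_sq' (by linarith : -(rA+rB) < dist cA cB) hAB,
      (by ring : (rA+rB)^2 = rA^2 + 2*rA*rB + rB^2)]
  have hu1gt : -1 < u1 := by
    rw [hu1d, lt_div_iff₀ (by positivity)]
    linarith [sq_lt_sq' (by linarith : -(dist cA cB) < rA - rB)
      (by linarith : rA - rB < dist cA cB),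
      (by ring : (rA-rB)^2 = rA^2 - 2*rA*rB + rB^2)]
  have hu2lt : u2 < 1 := by
    rw [hu2d, div_lt_one (by positivity)]
    linarith [sq_lt_sq' (by linarith : -(rA'+rB') < dist cA' cB') hA'B'lt,
      (by ring : (rA'+rB')^2 = rA'^2 + 2*rA'*rB' + rB'^2)]
  have hu2gt : -1 < u2 := by
    rw [hu2d, lt_div_iff₀ (by positivity)]
    linarith [sq_lt_sq' (by linarith : -(dist cA' cB') < rA' - rB')
      (by linarith : rA' - rB' < dist cA' cB'),
      (by ring : (rA'-rB')^2 = rA'^2 - 2*rA'*rB' + rB'^2)]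
  have hcblt : cb < 1 := by
    rw [hcbd, div_lt_one (by positivity)]
    linarith [sq_lt_sq' (by linarith : -(rA'+rB) < dist cA' cB) hA'Blt,
      (by ring : (rA'+rB)^2 = rA'^2 + 2*rA'*rB + rB^2)]
  have hcbgt : -1 < cb := by
    rw [hcbd, lt_div_iff₀ (by positivity)]
    linarith [sq_lt_sq' (by linarith : -(dist cA' cB) < rA' - rB)
      (by linarith : rA' - rB < dist cA' cB),
      (by ring : (rA'-rB)^2 = rA'^2 - 2*rA'*rB + rB^2)]
  have hcglt : cg < 1 := by
    rw [hcgd, div_lt_one (by positivity)]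
    linarith [sq_lt_sq' (by linarith : -(rA+rB') < dist cA cB') hAB'lt,
      (by ring : (rA+rB')^2 = rA^2 + 2*rA*rB' + rB'^2)]
  have hcggt : -1 < cg := by
    have hd1 : rA - rB' < dist cA cB' := by
      have := dist_comm cA cB'
      linarith [hB'Agt]
    rw [hcgd, lt_div_iff₀ (by positivity)]
    linarith [sq_lt_sq' (by linarith : -(dist cA cB') < rA - rB') hd1,
      (by ring : (rA-rB')^2 = rA^2 - 2*rA*rB' + rB'^2)]
  have hA1gt : 1 < A1 := by
    have hd1 : dist cA cA' < rA - rA' := by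
      have := dist_comm cA cA'
      linarith [hAA']
    rw [hA1d, lt_div_iff₀ (by positivity)]
    linarith [sq_lt_sq' (by linarith : -(rA - rA') < dist cA cA') hd1,
      (by ring : (rA-rA')^2 = rA^2 - 2*rA*rA' + rA'^2)]
  have hB2gt : 1 < B2 := by
    have hd1 : dist cB cB' < rB - rB' := by
      have := dist_comm cB cB'
      linarith [hBB']
    rw [hB2d, lt_div_iff₀ (by positivity)]
    linarith [sq_lt_sq' (by linarith : -(rB - rB') < dist cB cB') hd1,
      (by ring : (rB-rB')^2 = rB^2 - 2*rB*rB' + rB'^2)]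
  -- equal angles give u1 = u2
  have hu12 : u1 = u2 := by
    have h1 := congrArg Real.cos hangle
    rwa [Real.cos_arccos hu1gt.le hu1lt.le, Real.cos_arccos hu2gt.le hu2lt.le] at h1
  -- the bridge
  obtain ⟨R1, R2, hR1p, hR2p, hcon⟩ :=
    bridge (aX := (cA-p).re) (aY := (cA-p).im) (bX := (cB-p).re) (bY := (cB-p).im)
      (cX := (cA'-p).re) (cY := (cA'-p).im) (dX := (cB'-p).re) (dY := (cB'-p).im)
      hrA hrB hrA' hrB'
      (by rw [sq_dist_coord' p cA', dist_comm]; rw [hp1])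
      (by rw [sq_dist_coord' p cB', dist_comm]; rw [hp2])
      (by
        rw [sq_dist_coord' p cA]
        have h0 : (0:ℝ) ≤ dist cA p := dist_nonneg
        have hpA' : dist cA p < rA := by rw [dist_comm]; exact hpA
        exact sq_lt_sq' (by linarith) hpA')
      (by
        rw [sq_dist_coord' p cB]
        have h0 : (0:ℝ) ≤ dist cB p := dist_nonneg
        have hpB' : dist cB p < rB := by rw [dist_comm]; exact hpB
        exact sq_lt_sq' (by linarith) hpB')
      (u1 := u1) (u2 := u2) (cb := cb) (cg := cg) (A1 := A1) (B2 := B2)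
      (by rw [hu1d, sq_dist_coord p cA cB])
      (by rw [hu2d, sq_dist_coord p cA' cB'])
      (by rw [hcbd, sq_dist_coord p cA' cB])
      (by rw [hcgd, sq_dist_coord p cA cB'])
      (by rw [hA1d, sq_dist_coord p cA cA'])
      (by rw [hB2d, sq_dist_coord p cB cB'])
  rw [← hu12] at hcon
  exact core_lemma hu1gt hu1lt hcbgt hcblt.le hcggt hcglt.le hA1gt hB2gt hR1p hR2p hcon
end

section
/- Let {A,B} and {Ã,B̃} be pairs of overlapping closed disks in ℂ in general position, and set E = A ∩ B and Ẽ = Ã ∩ B̃. Then the Jordan curves ∂E and ∂Ẽ meet in exactly 0, 2, 4, or 6 points; in particular they cannot meet in 8 points. -/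
open Metric Real

noncomputable section EyesAuxSection
namespace EyesAux
open Set

/-- quadratic defining function of a circle -/
def g (c : ℂ) (r : ℝ) (z : ℂ) : ℝ := Complex.normSq (z - c) - r ^ 2

lemma g_cont (c : ℂ) (r : ℝ) : Continuous (g c r) := by
  unfold g
  exact (Complex.continuous_normSq.comp (continuous_id.sub continuous_const)).sub continuous_const

lemma dist_sq (z c : ℂ) : Complex.normSq (z - c) = dist z c ^ 2 := by
  rw [Complex.dist_eq, ← Complex.sq_norm]

lemma mem_closedBall_iff_g {c : ℂ} {r : ℝ} (hr : 0 < r) {z : ℂ} :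
    z ∈ closedBall c r ↔ g c r z ≤ 0 := by
  rw [mem_closedBall, g, dist_sq, sub_nonpos]
  exact ⟨fun h => by nlinarith [dist_nonneg (x := z) (y := c)],
    fun h => by nlinarith [dist_nonneg (x := z) (y := c)]⟩

lemma mem_ball_iff_g {c : ℂ} {r : ℝ} (hr : 0 < r) {z : ℂ} :
    z ∈ ball c r ↔ g c r z < 0 := by
  rw [mem_ball, g, dist_sq, sub_neg]
  exact ⟨fun h => by nlinarith [dist_nonneg (x := z) (y := c)],
    fun h => by nlinarith [dist_nonneg (x := z) (y := c)]⟩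

lemma mem_sphere_iff_g {c : ℂ} {r : ℝ} (hr : 0 < r) {z : ℂ} :
    z ∈ sphere c r ↔ g c r z = 0 := by
  rw [mem_sphere, g, dist_sq, sub_eq_zero]
  exact ⟨fun h => by rw [h], fun h => by nlinarith [dist_nonneg (x := z) (y := c)]⟩

lemma frontier_pair {c₁ c₂ : ℂ} {r₁ r₂ : ℝ} (h₁ : 0 < r₁) (h₂ : 0 < r₂) :
    frontier (closedBall c₁ r₁ ∩ closedBall c₂ r₂) =
      {z | max (g c₁ r₁ z) (g c₂ r₂ z) = 0} := by
  have hcl : IsClosed (closedBall c₁ r₁ ∩ closedBall c₂ r₂) :=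
    isClosed_closedBall.inter isClosed_closedBall
  rw [frontier, hcl.closure_eq, interior_inter, interior_closedBall _ h₁.ne',
    interior_closedBall _ h₂.ne']
  ext z
  simp only [mem_diff, mem_inter_iff, mem_setOf_eq, mem_closedBall_iff_g h₁,
    mem_closedBall_iff_g h₂, mem_ball_iff_g h₁, mem_ball_iff_g h₂]
  constructor
  · rintro ⟨⟨ha, hb⟩, hab⟩
    rcases ha.lt_or_eq with ha' | ha'
    · rcases hb.lt_or_eq with hb' | hb'
      · exact absurd ⟨ha', hb'⟩ hab
      · rw [max_eq_right (hb' ▸ ha : g c₁ r₁ z ≤ g c₂ r₂ z)]; exact hb'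
    · rw [max_eq_left (ha' ▸ hb : g c₂ r₂ z ≤ g c₁ r₁ z)]; exact ha'
  · intro h
    have h1 : g c₁ r₁ z ≤ 0 := le_max_left _ (g c₂ r₂ z) |>.trans h.le
    have h2 : g c₂ r₂ z ≤ 0 := le_max_right (g c₁ r₁ z) _ |>.trans h.le
    refine ⟨⟨h1, h2⟩, fun ⟨ha, hb⟩ => ?_⟩
    rcases max_cases (g c₁ r₁ z) (g c₂ r₂ z) with ⟨he, _⟩ | ⟨he, _⟩ <;> rw [he] at h <;>
      [exact ha.ne h; exact hb.ne h]

/-- Two transversal circles meet in at most two points. -/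
lemma pair_subset {c₁ c₂ : ℂ} {r₁ r₂ : ℝ} (h₁ : 0 < r₁) (h₂ : 0 < r₂)
    (ht : (sphere c₁ r₁ ∩ sphere c₂ r₂).Nonempty →
      dist c₁ c₂ ≠ r₁ + r₂ ∧ dist c₁ c₂ ≠ |r₁ - r₂|) :
    ∃ p q : ℂ, sphere c₁ r₁ ∩ sphere c₂ r₂ ⊆ {p, q} := by
  rcases eq_empty_or_nonempty (sphere c₁ r₁ ∩ sphere c₂ r₂) with he | hne
  · exact ⟨0, 0, by rw [he]; exact empty_subset _⟩
  obtain ⟨ht1, ht2⟩ := ht hne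
  have hc : c₁ ≠ c₂ := by
    rintro rfl
    obtain ⟨z, hz1, hz2⟩ := hne
    rw [mem_sphere] at hz1 hz2
    exact ht2 (by rw [hz1.symm.trans hz2, sub_self, abs_zero, dist_self])
  set u : ℂ := c₂ - c₁ with hu
  have hu0 : u ≠ 0 := sub_ne_zero.mpr hc.symm
  have hnsu : Complex.normSq u ≠ 0 := (Complex.normSq_pos.mpr hu0).ne'
  set k : ℝ := (Complex.normSq u + r₁ ^ 2 - r₂ ^ 2) / 2 with hk
  set s : ℝ := Real.sqrt (r₁ ^ 2 * Complex.normSq u - k ^ 2) with hs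
  refine ⟨c₁ + (↑k + ↑s * Complex.I) * u / ↑(Complex.normSq u),
    c₁ + (↑k - ↑s * Complex.I) * u / ↑(Complex.normSq u), ?_⟩
  rintro z ⟨hz1, hz2⟩
  rw [mem_sphere] at hz1 hz2
  set w : ℂ := z - c₁ with hw
  have nsw : Complex.normSq w = r₁ ^ 2 := by
    rw [hw, dist_sq, hz1]
  have nswu : Complex.normSq (w - u) = r₂ ^ 2 := by
    have : w - u = z - c₂ := by rw [hw, hu]; ring
    rw [this, dist_sq, hz2]
  set a : ℝ := (w * (starRingEnd ℂ) u).re with ha'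
  set b : ℝ := (w * (starRingEnd ℂ) u).im with hb'
  have hare : a = w.re * u.re + w.im * u.im := by
    simp [ha', Complex.mul_re]
  have haim : b = w.im * u.re - w.re * u.im := by
    simp [hb', Complex.mul_im]; ring
  have ha : a = k := by
    have e1 : w.re ^ 2 + w.im ^ 2 = r₁ ^ 2 := by
      rw [← nsw]; simp [Complex.normSq_apply]; ring
    have e2 : (w.re - u.re) ^ 2 + (w.im - u.im) ^ 2 = r₂ ^ 2 := by
      rw [← nswu]; simp [Complex.normSq_apply]; ring
    have e3 : Complex.normSq u = u.re ^ 2 + u.im ^ 2 := by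
      simp [Complex.normSq_apply]; ring
    rw [hare, hk, e3]; nlinarith [e1, e2]
  have hb2 : b ^ 2 = r₁ ^ 2 * Complex.normSq u - k ^ 2 := by
    have e3 : Complex.normSq u = u.re ^ 2 + u.im ^ 2 := by
      simp [Complex.normSq_apply]; ring
    have e1 : w.re ^ 2 + w.im ^ 2 = r₁ ^ 2 := by
      rw [← nsw]; simp [Complex.normSq_apply]; ring
    rw [haim, e3, ← ha, hare, ← e1]; ring
  have hsb : s = |b| := by
    rw [hs, ← hb2, Real.sqrt_sq_eq_abs]
  have hrec : z = c₁ + (↑a + ↑b * Complex.I) * u / ↑(Complex.normSq u) := by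
    have h1 : (↑a + ↑b * Complex.I) = w * (starRingEnd ℂ) u := (Complex.re_add_im _).symm ▸ rfl
    have h2 : (starRingEnd ℂ) u * u = ↑(Complex.normSq u) := by
      rw [mul_comm, Complex.mul_conj]
    have : z = c₁ + w := by rw [hw]; ring
    rw [this, h1]
    congr 1
    rw [mul_assoc, h2, mul_div_assoc, div_self (Complex.ofReal_ne_zero.mpr hnsu), mul_one]
  simp only [mem_insert_iff, mem_singleton_iff]
  rcases abs_choice b with hb | hb
  · left; rw [hrec, ha, hsb, hb]
  · right; rw [hrec, ha, hsb, hb]; push_cast; ring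

/-- nonvanishing angular derivative at a transversal crossing -/
lemma sinusoid_deriv {c₁ c₂ : ℂ} {r₁ r₂ : ℝ} (h₁ : 0 < r₁) (h₂ : 0 ≤ r₂)
    (ht1 : dist c₁ c₂ ≠ r₁ + r₂) (ht2 : dist c₁ c₂ ≠ |r₁ - r₂|) {θ : ℝ}
    (hz : circleMap c₁ r₁ θ ∈ sphere c₂ r₂) :
    ∃ m : ℝ, m ≠ 0 ∧ HasDerivAt (fun t => g c₂ r₂ (circleMap c₁ r₁ t)) m θ := by
  set d : ℂ := c₁ - c₂ with hd
  have key : ∀ t, g c₂ r₂ (circleMap c₁ r₁ t) =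
      (Complex.normSq d + r₁ ^ 2 - r₂ ^ 2) + 2 * r₁ * (d.re * Real.cos t + d.im * Real.sin t) := by
    intro t
    have h1 : (circleMap c₁ r₁ t) - c₂ = d + ↑r₁ * Complex.exp (↑t * Complex.I) := by
      simp [circleMap, hd]; ring
    rw [g, h1]
    simp [Complex.normSq_apply, Complex.add_re, Complex.add_im, Complex.mul_re, Complex.mul_im,
      Complex.exp_ofReal_mul_I_re, Complex.exp_ofReal_mul_I_im]
    linear_combination (r₁ ^ 2) * (Real.sin_sq_add_cos_sq t)
  refine ⟨2 * r₁ * (d.re * (-Real.sin θ) + d.im * Real.cos θ), ?_, ?_⟩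
  · -- nonvanishing
    intro hm0
    have him : (d * (starRingEnd ℂ) (Complex.exp (↑θ * Complex.I))).im = 0 := by
      simp [Complex.mul_im, Complex.exp_ofReal_mul_I_re, Complex.exp_ofReal_mul_I_im]
      nlinarith [hm0]
    set t₀ : ℝ := (d * (starRingEnd ℂ) (Complex.exp (↑θ * Complex.I))).re with ht₀
    set E : ℂ := Complex.exp (↑θ * Complex.I) with hE
    have hEd : d * (starRingEnd ℂ) E = (t₀ : ℂ) := Complex.ext rfl him
    have habsE : ‖E‖ = 1 := Complex.norm_exp_ofReal_mul_I θ
    have hnsE : (starRingEnd ℂ) E * E = 1 := by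
      rw [mul_comm, Complex.mul_conj, ← Complex.sq_norm, habsE]; norm_num
    have hdE : d = (t₀ : ℂ) * E := by
      calc d = d * ((starRingEnd ℂ) E * E) := by rw [hnsE, mul_one]
      _ = (t₀ : ℂ) * E := by rw [← mul_assoc, hEd]
    have hdist : dist c₁ c₂ = |t₀| := by
      rw [Complex.dist_eq, ← hd, hdE, norm_mul, habsE, mul_one, Complex.norm_real, Real.norm_eq_abs]
    have hr₂' : r₂ = |t₀ + r₁| := by
      have hz' : dist (circleMap c₁ r₁ θ) c₂ = r₂ := mem_sphere.mp hz
      have h1 : (circleMap c₁ r₁ θ) - c₂ = ((t₀ : ℂ) + r₁) * E := by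
        rw [circleMap, ← hE]
        rw [add_mul, ← hdE]
        rw [hd]; ring
      rw [Complex.dist_eq, h1, norm_mul, habsE, mul_one] at hz'
      rw [← hz']
      rw [← Complex.ofReal_add, Complex.norm_real, Real.norm_eq_abs]
    rcases abs_cases (t₀ + r₁) with ⟨he, _⟩ | ⟨he, _⟩
    · -- t₀ = r₂ - r₁
      apply ht2
      rw [hdist]
      have : t₀ = r₂ - r₁ := by rw [hr₂', he]; ring
      rw [this, abs_sub_comm]
    · -- t₀ = -r₂ - r₁
      apply ht1
      rw [hdist]
      have : t₀ = -r₂ - r₁ := by rw [hr₂', he]; ring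
      rw [this]
      rw [abs_of_nonpos (by linarith)]
      ring
  · -- derivative
    have : HasDerivAt (fun t => (Complex.normSq d + r₁ ^ 2 - r₂ ^ 2) +
        2 * r₁ * (d.re * Real.cos t + d.im * Real.sin t))
        (2 * r₁ * (d.re * (-Real.sin θ) + d.im * Real.cos θ)) θ := by
      exact (((Real.hasDerivAt_cos θ).const_mul d.re).add
        ((Real.hasDerivAt_sin θ).const_mul d.im)).const_mul (2 * r₁) |>.const_add _
    exact this.congr_of_eventuallyEq (Filter.Eventually.of_forall fun t => key t)

/-- sign of a function near a simple zero -/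
lemma sign_near {S : ℝ → ℝ} {m θp : ℝ} (hm : m ≠ 0) (h0 : S θp = 0)
    (hd : HasDerivAt S m θp) :
    ∃ δ > 0, ∀ θ, θ ≠ θp → |θ - θp| < δ → 0 < m * S θ * (θ - θp) := by
  have hslope := hasDerivAt_iff_tendsto_slope.mp hd
  have hev : ∀ᶠ θ in nhdsWithin θp {θp}ᶜ, |slope S θp θ - m| < |m| := by
    have := Metric.tendsto_nhds.mp hslope |m| (abs_pos.mpr hm)
    simpa [Real.dist_eq] using this
  rw [eventually_nhdsWithin_iff, Metric.eventually_nhds_iff] at hev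
  obtain ⟨δ, hδ, hball⟩ := hev
  refine ⟨δ, hδ, fun θ hθ hθδ => ?_⟩
  have h1 : |slope S θp θ - m| < |m| := by
    apply hball (by simpa [Real.dist_eq] using hθδ) hθ
  have hms : 0 < m * slope S θp θ := by
    rcases abs_sub_lt_iff.mp h1 with ⟨hA, hB⟩
    rcases lt_or_gt_of_ne hm with hneg | hpos
    · rw [abs_of_neg hneg] at hA hB
      have : slope S θp θ < 0 := by linarith
      exact mul_pos_of_neg_of_neg hneg this
    · rw [abs_of_pos hpos] at hA hB
      have : 0 < slope S θp θ := by linarith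
      exact mul_pos hpos this
  have hSθ : S θ = slope S θp θ * (θ - θp) := by
    rw [slope_def_field]
    field_simp [sub_ne_zero.mpr hθ]
    rw [h0]; ring
  have : m * S θ * (θ - θp) = (m * slope S θp θ) * (θ - θp) ^ 2 := by rw [hSθ]; ring
  rw [this]
  have hne := sub_ne_zero.mpr hθ
  exact mul_pos hms (by positivity)

/-- the function `ψ` crosses zero strictly at `t₀` -/
def Cross (ψ : ℝ → ℝ) (t₀ : ℝ) : Prop :=
  ∃ δ e : ℝ, 0 < δ ∧ e ≠ 0 ∧ ∀ u, u ≠ t₀ → |u - t₀| < δ → 0 < e * ψ u * (u - t₀)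

lemma no_zero_sign {ψ : ℝ → ℝ} (hc : Continuous ψ) {a b u v : ℝ}
    (hu : u ∈ Ioo a b) (hv : v ∈ Ioo a b) (hnz : ∀ t ∈ Ioo a b, ψ t ≠ 0) :
    0 < ψ u * ψ v := by
  have key : ∀ x y : ℝ, x ∈ Ioo a b → y ∈ Ioo a b → x ≤ y → 0 < ψ x * ψ y := by
    intro x y hx hy hxy
    have hψx := hnz x hx
    have hψy := hnz y hy
    rcases lt_or_gt_of_ne hψx with hx0 | hx0 <;> rcases lt_or_gt_of_ne hψy with hy0 | hy0
    · exact mul_pos_of_neg_of_neg hx0 hy0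
    · exfalso
      obtain ⟨t, ht, ht0⟩ := intermediate_value_Ioo hxy hc.continuousOn
        (show (0:ℝ) ∈ Ioo (ψ x) (ψ y) from ⟨hx0, hy0⟩)
      exact hnz t ⟨hx.1.trans ht.1, ht.2.trans hy.2⟩ ht0
    · exfalso
      obtain ⟨t, ht, ht0⟩ := intermediate_value_Ioo' hxy hc.continuousOn
        (show (0:ℝ) ∈ Ioo (ψ y) (ψ x) from ⟨hy0, hx0⟩)
      exact hnz t ⟨hx.1.trans ht.1, ht.2.trans hy.2⟩ ht0
    · exact mul_pos hx0 hy0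
  rcases le_total u v with h | h
  · exact key u v hu hv h
  · rw [mul_comm]; exact key v u hv hu h

/-- between two crossing zeros with no zero in between, the crossing signs are opposite -/
lemma step_sign {ψ : ℝ → ℝ} (hc : Continuous ψ) {a b δa δb ea eb : ℝ}
    (hab : a < b) (hδa : 0 < δa) (hδb : 0 < δb)
    (hsa : ∀ u, u ≠ a → |u - a| < δa → 0 < ea * ψ u * (u - a))
    (hsb : ∀ u, u ≠ b → |u - b| < δb → 0 < eb * ψ u * (u - b))
    (hnz : ∀ t ∈ Ioo a b, ψ t ≠ 0) :
    ea * eb < 0 := by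
  set u : ℝ := min (a + δa / 2) ((a + b) / 2) with hu
  set v : ℝ := max (b - δb / 2) ((a + b) / 2) with hv
  have hum1 : a < u := lt_min (by linarith) (by linarith)
  have hum2 : u < b := (min_le_right _ _).trans_lt (by linarith)
  have hvm1 : a < v := lt_of_lt_of_le (by linarith) (le_max_right _ _)
  have hvm2 : v < b := max_lt (by linarith) (by linarith)
  have huδ : |u - a| < δa := by
    rw [abs_of_pos (by linarith)]
    have : u ≤ a + δa / 2 := min_le_left _ _
    linarith
  have hvδ : |v - b| < δb := by
    rw [abs_of_neg (by linarith)]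
    have : b - δb / 2 ≤ v := le_max_left _ _
    linarith
  have h1 := hsa u hum1.ne' huδ
  have h2 := hsb v hvm2.ne hvδ
  have h3 : 0 < ψ u * ψ v := no_zero_sign hc ⟨hum1, hum2⟩ ⟨hvm1, hvm2⟩ hnz
  have p1 : 0 < ea * ψ u := by nlinarith
  have p2 : eb * ψ v < 0 := by nlinarith
  have p3 : (ea * ψ u) * (eb * ψ v) < 0 := mul_neg_of_pos_of_neg p1 p2
  by_contra hcon
  push_neg at hcon
  nlinarith [mul_nonneg hcon h3.le]

/-- transfer a crossing along a period -/
lemma cross_shift {ψ : ℝ → ℝ} {P t δ e : ℝ} (hper : Function.Periodic ψ P)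
    (hs : ∀ u, u ≠ t → |u - t| < δ → 0 < e * ψ u * (u - t)) :
    ∀ u, u ≠ t + P → |u - (t + P)| < δ → 0 < e * ψ u * (u - (t + P)) := by
  intro u hne hlt
  have h1 : u - P ≠ t := fun h => hne (by linarith [h])
  have h2 : |u - P - t| < δ := by
    have heq : u - P - t = u - (t + P) := by ring
    rw [heq]; exact hlt
  have h3 := hs (u - P) h1 h2
  rw [hper.sub_eq] at h3
  have heq : e * ψ u * (u - (t + P)) = e * ψ u * (u - P - t) := by ring
  rw [heq]; exact h3

theorem parity {ψ : ℝ → ℝ} {P : ℝ} (hP : 0 < P) (hc : Continuous ψ)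
    (hper : Function.Periodic ψ P)
    (hfin : {t | t ∈ Ico (0:ℝ) P ∧ ψ t = 0}.Finite)
    (hcross : ∀ t, ψ t = 0 → Cross ψ t) :
    Even {t | t ∈ Ico (0:ℝ) P ∧ ψ t = 0}.ncard := by
  classical
  set Z := {t | t ∈ Ico (0:ℝ) P ∧ ψ t = 0} with hZ
  choose δ e hδ he hsgn using hcross
  set F : Finset ℝ := hfin.toFinset with hF
  have hcard : Z.ncard = F.card := by
    rw [hF]; exact Set.ncard_eq_toFinset_card _ hfin
  rcases F.eq_empty_or_nonempty with hFe | hFne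
  · rw [hcard, hFe]; simp
  set l : List ℝ := F.sort (· ≤ ·) with hl
  have hsorted : l.SortedLT := F.sortedLT_sort
  have hmono : StrictMono l.get := hsorted.strictMono_get
  have hmem : ∀ x, x ∈ l ↔ (x ∈ Ico (0:ℝ) P ∧ ψ x = 0) := by
    intro x
    rw [hl, Finset.mem_sort, hF, Set.Finite.mem_toFinset]
    exact Iff.rfl
  set k := l.length with hk
  have hlen : k = F.card := Finset.length_sort _
  have hlpos : 0 < k := by rw [hlen]; exact Finset.card_pos.mpr hFne
  have hget : ∀ i : Fin l.length, ψ (l.get i) = 0 ∧ l.get i ∈ Ico (0:ℝ) P := by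
    intro i
    have hmm : l.get i ∈ l := l.get_mem i
    exact ⟨((hmem _).mp hmm).2, ((hmem _).mp hmm).1⟩
  have hadj : ∀ i j : Fin l.length, (i : ℕ) + 1 = (j : ℕ) →
      ∀ t ∈ Ioo (l.get i) (l.get j), ψ t ≠ 0 := by
    intro i j hij t ht hψt
    have htZ : t ∈ l := by
      rw [hmem]
      exact ⟨⟨(hget i).2.1.trans ht.1.le, ht.2.trans (hget j).2.2⟩, hψt⟩
    obtain ⟨n, hn⟩ := List.mem_iff_get.mp htZ
    rcases lt_or_ge (n : ℕ) (j : ℕ) with h | h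
    · have hni : n ≤ i := Fin.le_def.mpr (by omega)
      have := hmono.monotone hni
      rw [hn] at this
      exact absurd ht.1 (not_lt.mpr this)
    · have hjn : j ≤ n := Fin.le_def.mpr h
      have := hmono.monotone hjn
      rw [hn] at this
      exact absurd ht.2 (not_lt.mpr this)
  set ε : ℕ → ℝ := fun i => if h : i < k then e (l.get ⟨i, h⟩) (hget ⟨i, h⟩).1 else 1 with hε
  have hεne : ∀ i (h : i < k), ε i ≠ 0 := by
    intro i h; rw [hε]; simp only [h, dif_pos]; exact he _ _
  have hstep : ∀ i (h : i + 1 < k), ε i * ε (i + 1) < 0 := by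
    intro i h
    have h' : i < k := Nat.lt_of_succ_lt h
    have hAB : l.get ⟨i, h'⟩ < l.get ⟨i + 1, h⟩ :=
      hmono (Fin.mk_lt_mk.mpr (Nat.lt_succ_self i))
    have := step_sign hc hAB (hδ _ (hget ⟨i, h'⟩).1) (hδ _ (hget ⟨i+1, h⟩).1)
      (hsgn _ (hget ⟨i, h'⟩).1) (hsgn _ (hget ⟨i+1, h⟩).1)
      (hadj ⟨i, h'⟩ ⟨i+1, h⟩ rfl)
    rw [hε]
    simp only [h', h, dif_pos]
    exact this
  have hchain : ∀ i (h : i < k), 0 < (-1 : ℝ) ^ i * ε 0 * ε i := by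
    intro i
    induction i with
    | zero =>
      intro h
      have h0 := hεne 0 h
      have := mul_self_pos.mpr h0
      simpa using this
    | succ n ih =>
      intro h
      have hn : n < k := Nat.lt_of_succ_lt h
      have h1 := ih hn
      have h2 := hstep n h
      have h3 := hεne n hn
      have hpow : (-1 : ℝ) ^ (n + 1) = -(-1 : ℝ) ^ n := by ring
      rw [hpow]
      nlinarith [mul_self_pos.mpr h3]
  have hk1 : k - 1 < k := Nat.sub_lt hlpos one_pos
  have hwrap : ε (k - 1) * ε 0 < 0 := by
    have hAB : l.get ⟨k - 1, hk1⟩ < l.get ⟨0, hlpos⟩ + P := by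
      have h1 : l.get ⟨k - 1, hk1⟩ < P := (hget ⟨k - 1, hk1⟩).2.2
      have h2 : (0:ℝ) ≤ l.get ⟨0, hlpos⟩ := (hget ⟨0, hlpos⟩).2.1
      linarith
    have hnz : ∀ t ∈ Ioo (l.get ⟨k - 1, hk1⟩) (l.get ⟨0, hlpos⟩ + P), ψ t ≠ 0 := by
      intro t ht hψt
      rcases lt_or_ge t P with hlt | hge
      · have htl : t ∈ l := (hmem t).mpr
          ⟨⟨(hget ⟨k-1, hk1⟩).2.1.trans ht.1.le, hlt⟩, hψt⟩
        obtain ⟨n, hn⟩ := List.mem_iff_get.mp htl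
        have hn2 : (n : ℕ) < k := n.isLt
        have hni : n ≤ (⟨k-1, hk1⟩ : Fin l.length) := Fin.le_def.mpr (by simp only [Fin.val_mk]; omega)
        have := hmono.monotone hni
        rw [hn] at this
        exact absurd ht.1 (not_lt.mpr this)
      · have hψ' : ψ (t - P) = 0 := by rw [hper.sub_eq]; exact hψt
        have hBP : l.get ⟨0, hlpos⟩ < P := (hget ⟨0, hlpos⟩).2.2
        have htl : t - P ∈ l := (hmem _).mpr
          ⟨⟨by linarith, by linarith [ht.2]⟩, hψ'⟩
        obtain ⟨n, hn⟩ := List.mem_iff_get.mp htl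
        have h0n : (⟨0, hlpos⟩ : Fin l.length) ≤ n := Fin.le_def.mpr (Nat.zero_le _)
        have := hmono.monotone h0n
        rw [hn] at this
        linarith [ht.2]
    have := step_sign hc hAB (hδ _ (hget ⟨k-1, hk1⟩).1) (hδ _ (hget ⟨0, hlpos⟩).1)
      (hsgn _ (hget ⟨k-1, hk1⟩).1)
      (cross_shift hper (hsgn _ (hget ⟨0, hlpos⟩).1))
      hnz
    rw [hε]
    simp only [hk1, hlpos, dif_pos]
    exact this
  have hfinal := hchain (k - 1) hk1
  have hodd : Odd (k - 1) := by
    rcases Nat.even_or_odd (k - 1) with hev | hodd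
    · exfalso
      rw [hev.neg_one_pow] at hfinal
      nlinarith
    · exact hodd
  have hkeven : Even k := by
    obtain ⟨m, hm⟩ := hodd
    exact ⟨m + 1, by omega⟩
  rw [hcard, ← hlen]
  exact hkeven

lemma max_eq_zero_of_neg {a b : ℝ} (h : max a b = 0) (hb : b < 0) : a = 0 := by
  rcases max_cases a b with ⟨he, _⟩ | ⟨he, hle⟩
  · rw [← he, h]
  · rw [he] at h; exact absurd h hb.ne

lemma max_sign_pos {w x y : ℝ} (hy : y < 0) (hwx : 0 < w * x) : 0 < w * max x y := by
  rcases le_or_gt x 0 with hx | hx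
  · have hx' : x < 0 := lt_of_le_of_ne hx (by rintro rfl; simp at hwx)
    have hw : w < 0 := by nlinarith
    have : max x y < 0 := max_lt hx' hy
    exact mul_pos_of_neg_of_neg hw this
  · rwa [max_eq_left (by linarith : y ≤ x)]

set_option maxHeartbeats 1000000 in
/-- Main local lemma: at a transversal boundary point, the defining function of the
primed eye crosses sign along the parametrized boundary of the unprimed eye. -/
lemma cross_aux {γ : ℝ → ℂ} {t₀ : ℝ} {c₁ c₂ c₁' c₂' : ℂ} {r₁ r₂ r₁' r₂' : ℝ}
    (h₁ : 0 < r₁) (h₁' : 0 < r₁')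
    (hγc : Continuous γ)
    (hmem : ∀ t, max (g c₁ r₁ (γ t)) (g c₂ r₂ (γ t)) = 0)
    (hinj : ∀ u v, |u - t₀| < 1 → |v - t₀| < 1 → γ u = γ v → u = v)
    (hg2 : g c₂ r₂ (γ t₀) < 0)
    (hg1' : g c₁' r₁' (γ t₀) = 0) (hg2' : g c₂' r₂' (γ t₀) < 0)
    (ht1 : dist c₁ c₁' ≠ r₁ + r₁') (ht2 : dist c₁ c₁' ≠ |r₁ - r₁'|) :
    Cross (fun t => max (g c₁' r₁' (γ t)) (g c₂' r₂' (γ t))) t₀ := by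
  have hg1 : g c₁ r₁ (γ t₀) = 0 := max_eq_zero_of_neg (hmem t₀) hg2
  set p : ℂ := γ t₀ with hp
  have hpsp : p ∈ sphere c₁ r₁ := (mem_sphere_iff_g h₁).mpr hg1
  have hp' : p ∈ sphere c₁' r₁' := (mem_sphere_iff_g h₁').mpr hg1'
  obtain ⟨θp, hθp⟩ : ∃ θ, circleMap c₁ r₁ θ = p := by
    have : p ∈ Set.range (circleMap c₁ r₁) := by
      rw [range_circleMap, abs_of_pos h₁]; exact hpsp
    exact this
  -- the sinusoid along the circle through p
  set S : ℝ → ℝ := fun θ => g c₁' r₁' (circleMap c₁ r₁ θ) with hS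
  have hS0 : S θp = 0 := by rw [hS]; simp only; rw [hθp]; exact hg1'
  obtain ⟨m, hm, hmder⟩ := sinusoid_deriv h₁ h₁'.le ht1 ht2
    (show circleMap c₁ r₁ θp ∈ sphere c₁' r₁' from hθp ▸ hp')
  obtain ⟨δ₂, hδ₂, hsgn⟩ := sign_near hm hS0 hmder
  -- the angle chart near p
  set w : ℝ → ℂ := fun t => (γ t - c₁) * Complex.exp ((↑(-θp)) * Complex.I) with hw
  have hw0 : w t₀ = (r₁ : ℂ) := by
    have h1 : γ t₀ - c₁ = ↑r₁ * Complex.exp ((θp : ℂ) * Complex.I) := by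
      rw [← hp, ← hθp, circleMap]; ring
    rw [hw]; simp only; rw [h1, mul_assoc, ← Complex.exp_add]
    push_cast
    rw [show (θp : ℂ) * Complex.I + -θp * Complex.I = 0 by ring, Complex.exp_zero, mul_one]
  set Θ : ℝ → ℝ := fun t => θp + Complex.arg (w t) with hΘ
  have hwcont : Continuous w := (hγc.sub continuous_const).mul continuous_const
  have hΘt₀ : Θ t₀ = θp := by
    rw [hΘ]; simp only; rw [hw0, Complex.arg_ofReal_of_nonneg h₁.le, add_zero]
  have hΘcont : ContinuousAt Θ t₀ := by
    apply ContinuousAt.add continuousAt_const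
    apply (Complex.continuousAt_arg ?_).comp hwcont.continuousAt
    rw [hw0, Complex.mem_slitPlane_iff]
    left; simpa using h₁
  -- the key pointwise identity
  have hcircle : ∀ t, γ t ∈ sphere c₁ r₁ → circleMap c₁ r₁ (Θ t) = γ t := by
    intro t ht
    have habs : ‖w t‖ = r₁ := by
      rw [hw]; simp only
      rw [norm_mul, Complex.norm_exp_ofReal_mul_I, mul_one, ← Complex.dist_eq]
      exact mem_sphere.mp ht
    have he : Complex.exp ((Θ t : ℂ) * Complex.I) =
        Complex.exp ((θp : ℂ) * Complex.I) * Complex.exp ((Complex.arg (w t) : ℂ) * Complex.I) := by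
      rw [← Complex.exp_add, hΘ]; push_cast; ring_nf
    rw [circleMap, he]
    have h2 : (↑r₁ : ℂ) * Complex.exp ((Complex.arg (w t) : ℂ) * Complex.I) = w t := by
      rw [← habs, Complex.norm_mul_exp_arg_mul_I]
    have h3 : Complex.exp ((θp:ℂ) * Complex.I) * w t = γ t - c₁ := by
      rw [hw]; simp only
      rw [show ((↑(-θp) : ℂ)) = -(θp:ℂ) by push_cast; ring]
      rw [mul_comm ((γ t - c₁)) _, ← mul_assoc, ← Complex.exp_add]
      rw [show (θp : ℂ) * Complex.I + -(θp:ℂ) * Complex.I = 0 by ring, Complex.exp_zero, one_mul]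
    calc c₁ + ↑r₁ * (Complex.exp ((θp:ℂ) * Complex.I) * Complex.exp ((Complex.arg (w t) : ℂ) * Complex.I))
        = c₁ + Complex.exp ((θp:ℂ) * Complex.I) * (↑r₁ * Complex.exp ((Complex.arg (w t):ℂ) * Complex.I)) := by ring
      _ = c₁ + Complex.exp ((θp:ℂ) * Complex.I) * w t := by rw [h2]
      _ = c₁ + (γ t - c₁) := by rw [h3]
      _ = γ t := by ring
  -- eventual conditions near t₀
  have hev : ∀ᶠ u in nhds t₀, g c₂ r₂ (γ u) < 0 ∧ g c₂' r₂' (γ u) < 0 ∧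
      |Θ u - θp| < δ₂ ∧ 0 < (w u).re := by
    have e1 : ∀ᶠ u in nhds t₀, g c₂ r₂ (γ u) < 0 :=
      ((g_cont c₂ r₂).comp hγc).continuousAt.eventually_lt_const hg2
    have e2 : ∀ᶠ u in nhds t₀, g c₂' r₂' (γ u) < 0 :=
      ((g_cont c₂' r₂').comp hγc).continuousAt.eventually_lt_const hg2'
    have e3 : ∀ᶠ u in nhds t₀, |Θ u - θp| < δ₂ := by
      have ht : Filter.Tendsto (fun u => |Θ u - θp|) (nhds t₀) (nhds |Θ t₀ - θp|) :=
        ((hΘcont.sub continuousAt_const).abs)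
      rw [hΘt₀, sub_self, abs_zero] at ht
      exact ht.eventually_lt_const hδ₂
    have e4 : ∀ᶠ u in nhds t₀, 0 < (w u).re := by
      have : ContinuousAt (fun u => (w u).re) t₀ :=
        (Complex.continuous_re.comp hwcont).continuousAt
      apply this.eventually_const_lt
      show 0 < (w t₀).re
      rw [hw0]; simpa using h₁
    exact e1.and (e2.and (e3.and e4))
  obtain ⟨δ₀, hδ₀, hball⟩ := Metric.eventually_nhds_iff.mp hev
  set δ : ℝ := min δ₀ 1 with hδdef
  have hδpos : 0 < δ := lt_min hδ₀ one_pos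
  -- facts for u in the δ-ball
  have hfacts : ∀ u, |u - t₀| < δ → γ u ∈ sphere c₁ r₁ ∧ g c₂' r₂' (γ u) < 0 ∧
      |Θ u - θp| < δ₂ ∧ circleMap c₁ r₁ (Θ u) = γ u := by
    intro u hu
    have hu' : dist u t₀ < δ₀ := by
      rw [Real.dist_eq]; exact hu.trans_le (min_le_left _ _)
    obtain ⟨hb1, hb2, hb3, _⟩ := hball hu'
    have hsph : γ u ∈ sphere c₁ r₁ :=
      (mem_sphere_iff_g h₁).mpr (max_eq_zero_of_neg (hmem u) hb1)
    exact ⟨hsph, hb2, hb3, hcircle u hsph⟩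
  -- injectivity of Θ near t₀
  have hΘinj : ∀ u v, |u - t₀| < δ → |v - t₀| < δ → Θ u = Θ v → u = v := by
    intro u v huδ hvδ huv
    obtain ⟨_, _, _, hcu⟩ := hfacts u huδ
    obtain ⟨_, _, _, hcv⟩ := hfacts v hvδ
    exact hinj u v (huδ.trans_le (min_le_right _ _)) (hvδ.trans_le (min_le_right _ _))
      (by rw [← hcu, ← hcv, huv])
  have hΘne : ∀ u, u ≠ t₀ → |u - t₀| < δ → Θ u ≠ θp := by
    intro u hne huδ hΘu
    obtain ⟨_, _, _, hcu⟩ := hfacts u huδ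
    apply hne
    apply hinj u t₀ (huδ.trans_le (min_le_right _ _)) (by simpa using one_pos)
    rw [← hcu, hΘu, hθp, hp]
  -- Θ is strictly monotone (or antitone) on a closed interval around t₀
  have hΘconI : ContinuousOn Θ (Icc (t₀ - δ/2) (t₀ + δ/2)) := by
    intro u hu
    have huδ : |u - t₀| < δ := by
      rw [abs_lt]; constructor <;> [linarith [hu.1]; linarith [hu.2]]
    have hu' : dist u t₀ < δ₀ := by
      rw [Real.dist_eq]; exact huδ.trans_le (min_le_left _ _)
    obtain ⟨_, _, _, hre⟩ := hball hu'
    apply ContinuousAt.continuousWithinAt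
    apply ContinuousAt.add continuousAt_const
    apply (Complex.continuousAt_arg ?_).comp hwcont.continuousAt
    rw [Complex.mem_slitPlane_iff]; left; exact hre
  have hΘinjI : InjOn Θ (Icc (t₀ - δ/2) (t₀ + δ/2)) := by
    intro u hu v hv huv
    have huδ : |u - t₀| < δ := by rw [abs_lt]; constructor <;> [linarith [hu.1]; linarith [hu.2]]
    have hvδ : |v - t₀| < δ := by rw [abs_lt]; constructor <;> [linarith [hv.1]; linarith [hv.2]]
    exact hΘinj u v huδ hvδ huv
  have hmono := ContinuousOn.strictMonoOn_of_injOn_Icc' (by linarith : t₀ - δ/2 ≤ t₀ + δ/2)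
    hΘconI hΘinjI
  have ht₀I : t₀ ∈ Icc (t₀ - δ/2) (t₀ + δ/2) := by constructor <;> linarith
  -- final crossing property
  rcases hmono with hmon | hant
  · refine ⟨δ/2, m, by linarith, hm, ?_⟩
    intro u hne huδ'
    have huδ : |u - t₀| < δ := by rw [abs_lt] at *; constructor <;> [linarith [huδ'.1]; linarith [huδ'.2]]
    obtain ⟨hsph, hb2, hb3, hcirc⟩ := hfacts u huδ
    have huI : u ∈ Icc (t₀ - δ/2) (t₀ + δ/2) := by
      rw [abs_lt] at huδ'; constructor <;> linarith [huδ'.1, huδ'.2]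
    have hΘu : Θ u ≠ θp := hΘne u hne huδ
    have hkey := hsgn (Θ u) hΘu hb3
    have hSeq : S (Θ u) = g c₁' r₁' (γ u) := by rw [hS]; simp only; rw [hcirc]
    rw [hSeq] at hkey
    rcases lt_or_gt_of_ne hne with hlt | hgt
    · have : Θ u < θp := by
        have := hmon huI ht₀I hlt
        rwa [hΘt₀] at this
      have hmS : m * g c₁' r₁' (γ u) < 0 := by nlinarith
      have := max_sign_pos hb2 (show 0 < (-m) * g c₁' r₁' (γ u) by linarith)
      nlinarith
    · have : θp < Θ u := by
        have := hmon ht₀I huI hgt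
        rwa [hΘt₀] at this
      have hmS : 0 < m * g c₁' r₁' (γ u) := by nlinarith
      have := max_sign_pos hb2 hmS
      nlinarith
  · refine ⟨δ/2, -m, by linarith, neg_ne_zero.mpr hm, ?_⟩
    intro u hne huδ'
    have huδ : |u - t₀| < δ := by rw [abs_lt] at *; constructor <;> [linarith [huδ'.1]; linarith [huδ'.2]]
    obtain ⟨hsph, hb2, hb3, hcirc⟩ := hfacts u huδ
    have huI : u ∈ Icc (t₀ - δ/2) (t₀ + δ/2) := by
      rw [abs_lt] at huδ'; constructor <;> linarith [huδ'.1, huδ'.2]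
    have hΘu : Θ u ≠ θp := hΘne u hne huδ
    have hkey := hsgn (Θ u) hΘu hb3
    have hSeq : S (Θ u) = g c₁' r₁' (γ u) := by rw [hS]; simp only; rw [hcirc]
    rw [hSeq] at hkey
    rcases lt_or_gt_of_ne hne with hlt | hgt
    · have : θp < Θ u := by
        have := hant huI ht₀I hlt
        rwa [hΘt₀] at this
      have hmS : 0 < m * g c₁' r₁' (γ u) := by nlinarith
      have := max_sign_pos hb2 hmS
      nlinarith
    · have : Θ u < θp := by
        have := hant ht₀I huI hgt
        rwa [hΘt₀] at this
      have hmS : m * g c₁' r₁' (γ u) < 0 := by nlinarith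
      have := max_sign_pos hb2 (show 0 < (-m) * g c₁' r₁' (γ u) by linarith)
      nlinarith

lemma max_eq_zero' {a b : ℝ} (h : max a b = 0) : a = 0 ∨ b = 0 := by
  rcases max_cases a b with ⟨he, _⟩ | ⟨he, _⟩
  · left; rw [← he, h]
  · right; rw [← he, h]

lemma circle_inj {u v : ℝ} (h : circleMap 0 1 u = circleMap 0 1 v)
    (hlt : |u - v| < 2 * π) : u = v := by
  have h' : Complex.exp (↑u * Complex.I) = Complex.exp (↑v * Complex.I) := by
    simpa [circleMap] using h
  rw [Complex.exp_eq_exp_iff_exists_int] at h'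
  obtain ⟨n, hn⟩ := h'
  have h2 : ((u - v - n * (2 * π) : ℝ) : ℂ) * Complex.I = 0 := by
    push_cast
    linear_combination hn
  have h3 : (u - v - n * (2 * π) : ℝ) = 0 := by
    rcases mul_eq_zero.mp h2 with h | h
    · exact_mod_cast h
    · exact absurd h Complex.I_ne_zero
  have h4 : u - v = n * (2 * π) := by linarith
  have h5 : |(n : ℝ)| * (2 * π) < 2 * π := by
    calc |(n : ℝ)| * (2 * π) = |(n : ℝ)| * |2 * π| := by
          rw [abs_of_pos Real.two_pi_pos]
      _ = |u - v| := by rw [← abs_mul, h4]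
      _ < 2 * π := hlt
  have h6 : |(n : ℝ)| < 1 := by
    nlinarith [Real.two_pi_pos]
  have h7 : n = 0 := by
    have h8 : -1 < n ∧ n < 1 := abs_lt.mp (by exact_mod_cast h6)
    omega
  rw [h7] at h4; push_cast at h4; linarith

lemma coverage {c₁ c₂ c₃ : ℂ} {r₁ r₂ r₃ : ℝ} (hr₁ : 0 ≤ r₁)
    (hz₀ : ∃ z₀ ∈ sphere c₁ r₁, min (g c₂ r₂ z₀) (g c₃ r₃ z₀) < 0)
    (hnz : ∀ z ∈ sphere c₁ r₁, min (g c₂ r₂ z) (g c₃ r₃ z) ≠ 0) :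
    ∀ z ∈ sphere c₁ r₁, min (g c₂ r₂ z) (g c₃ r₃ z) < 0 := by
  set f : ℂ → ℝ := fun z => min (g c₂ r₂ z) (g c₃ r₃ z) with hf
  have hfc : ContinuousOn f (sphere c₁ r₁) := ((g_cont _ _).min (g_cont _ _)).continuousOn
  have hconn : IsPreconnected (sphere c₁ r₁) := by
    refine (isConnected_sphere ?_ c₁ hr₁).isPreconnected
    rw [Complex.rank_real_complex]; norm_num
  intro z hz
  by_contra hge
  push_neg at hge
  have hgt : 0 < f z := lt_of_le_of_ne hge (fun h => hnz z hz h.symm)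
  obtain ⟨z₀, hz₀m, hz₀v⟩ := hz₀
  have hIcc := hconn.intermediate_value hz₀m hz hfc
  obtain ⟨y, hy, hy0⟩ := hIcc ⟨hz₀v.le, hgt.le⟩
  exact hnz y hy hy0

lemma max_step {v c : ℂ} {r : ℝ} (hr : 0 < r) (hlt : dist v c < r)
    (hmax : ∀ z ∈ sphere c r, ‖z‖ ≤ ‖v‖) : False := by
  set u : ℂ := if c = 0 then 1 else (↑(‖c‖⁻¹) : ℂ) * c with hu
  have hun : ‖u‖ = 1 := by
    rw [hu]
    split_ifs with hc
    · simp
    · rw [norm_mul, Complex.norm_real, norm_inv, norm_norm,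
        inv_mul_cancel₀ (norm_ne_zero_iff.mpr hc)]
  set y : ℂ := c + (r : ℂ) * u with hy
  have hym : y ∈ sphere c r := by
    rw [mem_sphere, dist_eq_norm, hy]
    have he : c + (r:ℂ) * u - c = (r:ℂ) * u := by ring
    rw [he, norm_mul, hun, mul_one, Complex.norm_real, Real.norm_eq_abs, abs_of_pos hr]
  have hny : ‖y‖ = ‖c‖ + r := by
    by_cases hc : c = 0
    · rw [hy, hu, if_pos hc, hc]
      simp [Complex.norm_real, Real.norm_eq_abs, abs_of_pos hr]
    · have hcn : (0:ℝ) < ‖c‖ := norm_pos_iff.mpr hc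
      have he : y = ((1 + r * ‖c‖⁻¹ : ℝ) : ℂ) * c := by
        rw [hy, hu, if_neg hc]; push_cast; ring
      rw [he, norm_mul, Complex.norm_real, Real.norm_eq_abs,
        abs_of_pos (by positivity), add_mul, one_mul, mul_assoc,
        inv_mul_cancel₀ hcn.ne', mul_one, add_comm]
  have h1 := hmax y hym
  have h2 : ‖v‖ ≤ ‖c‖ + dist v c := by
    rw [dist_eq_norm]
    calc ‖v‖ = ‖c + (v - c)‖ := by ring_nf
      _ ≤ ‖c‖ + ‖v - c‖ := norm_add_le _ _
  rw [hny] at h1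
  linarith


lemma card6 {T Qa Qb Qc : Set ℂ} {pa qa pb qb pc qc : ℂ}
    (ha : Qa ⊆ {pa, qa}) (hb : Qb ⊆ {pb, qb}) (hc : Qc ⊆ {pc, qc})
    (hsub : T ⊆ Qa ∪ Qb ∪ Qc) : T.ncard ≤ 6 := by
  have hpair : ∀ a b : ℂ, ({a, b} : Set ℂ).ncard ≤ 2 := by
    intro a b
    have := Set.ncard_insert_le a ({b} : Set ℂ)
    rwa [Set.ncard_singleton] at this
  have hfin : (({pa, qa} ∪ {pb, qb} ∪ {pc, qc}) : Set ℂ).Finite :=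
    ((((Set.finite_singleton _).insert _).union
      ((Set.finite_singleton _).insert _)).union
      ((Set.finite_singleton _).insert _))
  have h1 : T ⊆ ({pa, qa} ∪ {pb, qb} ∪ {pc, qc} : Set ℂ) :=
    hsub.trans (union_subset_union (union_subset_union ha hb) hc)
  have h2 := Set.ncard_le_ncard h1 hfin
  have h3 := Set.ncard_union_le (({pa,qa} ∪ {pb,qb}) : Set ℂ) ({pc,qc} : Set ℂ)
  have h4 := Set.ncard_union_le ({pa,qa} : Set ℂ) ({pb,qb} : Set ℂ)
  have := hpair pa qa; have := hpair pb qb; have := hpair pc qc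
  omega

end EyesAux
end EyesAuxSection


open Metric Real

/-- **Lemma: boundaries of two eyes meet 0, 2, 4 or 6 times.**  Let `{A,B}` and
`{Ã,B̃}` be pairs of overlapping closed disks in `ℂ` in general position, and set
`E = A ∩ B`, `Ẽ = Ã ∩ B̃`.  Then `∂E ∩ ∂Ẽ` is a finite set of cardinality
`0`, `2`, `4` or `6` (in particular never `8`). -/
theorem eyes_meet_at_most_six
    (cA cB cA' cB' : ℂ) (rA rB rA' rB' : ℝ)
    (hrA : 0 < rA) (hrB : 0 < rB) (hrA' : 0 < rA') (hrB' : 0 < rB')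
    (hovAB : (ball cA rA ∩ ball cB rB).Nonempty)
    (hovAB' : (ball cA' rA' ∩ ball cB' rB').Nonempty)
    -- general position:
    (htAA : CircTrans cA rA cA' rA') (htAB : CircTrans cA rA cB' rB')
    (htBA : CircTrans cB rB cA' rA') (htBB : CircTrans cB rB cB' rB')
    (hpts : ∀ z ∈ Metric.sphere cA rA ∩ Metric.sphere cB rB,
      z ∉ Metric.sphere cA' rA' ∪ Metric.sphere cB' rB')
    (hpts' : ∀ z ∈ Metric.sphere cA' rA' ∩ Metric.sphere cB' rB',
      z ∉ Metric.sphere cA rA ∪ Metric.sphere cB rB) :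
    ((frontier (closedBall cA rA ∩ closedBall cB rB) ∩
        frontier (closedBall cA' rA' ∩ closedBall cB' rB')).Finite) ∧
      (frontier (closedBall cA rA ∩ closedBall cB rB) ∩
        frontier (closedBall cA' rA' ∩ closedBall cB' rB')).ncard ∈
        ({0, 2, 4, 6} : Set ℕ) := by
  classical
  open EyesAux in
  open Set in
  obtain ⟨zE, hzE⟩ := hovAB
  have hfrE : frontier (closedBall cA rA ∩ closedBall cB rB) =
      {z | max (g cA rA z) (g cB rB z) = 0} := frontier_pair hrA hrB
  have hfrE' : frontier (closedBall cA' rA' ∩ closedBall cB' rB') =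
      {z | max (g cA' rA' z) (g cB' rB' z) = 0} := frontier_pair hrA' hrB'
  set T := frontier (closedBall cA rA ∩ closedBall cB rB) ∩
      frontier (closedBall cA' rA' ∩ closedBall cB' rB') with hTdef
  have hTmem : ∀ z, z ∈ T ↔ (max (g cA rA z) (g cB rB z) = 0 ∧
      max (g cA' rA' z) (g cB' rB' z) = 0) := by
    intro z
    rw [hTdef, Set.mem_inter_iff, hfrE, hfrE']
    exact Iff.rfl
  -- decomposition of points of T
  have hdec : ∀ z ∈ T,
      ((g cA rA z = 0 ∧ g cB rB z < 0) ∨ (g cB rB z = 0 ∧ g cA rA z < 0)) ∧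
      ((g cA' rA' z = 0 ∧ g cB' rB' z < 0) ∨ (g cB' rB' z = 0 ∧ g cA' rA' z < 0)) := by
    intro z hz
    obtain ⟨h1, h2⟩ := (hTmem z).mp hz
    have hone : ¬(g cA rA z = 0 ∧ g cB rB z = 0) := by
      rintro ⟨hA0, hB0⟩
      have hmm : z ∈ Metric.sphere cA rA ∩ Metric.sphere cB rB :=
        ⟨(mem_sphere_iff_g hrA).mpr hA0, (mem_sphere_iff_g hrB).mpr hB0⟩
      have hnp := hpts z hmm
      rcases max_eq_zero' h2 with h | h
      · exact hnp (Set.mem_union_left _ ((mem_sphere_iff_g hrA').mpr h))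
      · exact hnp (Set.mem_union_right _ ((mem_sphere_iff_g hrB').mpr h))
    have hone' : ¬(g cA' rA' z = 0 ∧ g cB' rB' z = 0) := by
      rintro ⟨hA0, hB0⟩
      have hmm : z ∈ Metric.sphere cA' rA' ∩ Metric.sphere cB' rB' :=
        ⟨(mem_sphere_iff_g hrA').mpr hA0, (mem_sphere_iff_g hrB').mpr hB0⟩
      have hnp := hpts' z hmm
      rcases max_eq_zero' h1 with h | h
      · exact hnp (Set.mem_union_left _ ((mem_sphere_iff_g hrA).mpr h))
      · exact hnp (Set.mem_union_right _ ((mem_sphere_iff_g hrB).mpr h))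
    constructor
    · rcases max_eq_zero' h1 with h | h
      · exact Or.inl ⟨h, lt_of_le_of_ne ((le_max_right _ _).trans h1.le)
          (fun hB => hone ⟨h, hB⟩)⟩
      · exact Or.inr ⟨h, lt_of_le_of_ne ((le_max_left _ _).trans h1.le)
          (fun hA => hone ⟨hA, h⟩)⟩
    · rcases max_eq_zero' h2 with h | h
      · exact Or.inl ⟨h, lt_of_le_of_ne ((le_max_right _ _).trans h2.le)
          (fun hB => hone' ⟨h, hB⟩)⟩
      · exact Or.inr ⟨h, lt_of_le_of_ne ((le_max_left _ _).trans h2.le)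
          (fun hA => hone' ⟨hA, h⟩)⟩
  -- the four chord point-pairs
  obtain ⟨p1, q1, hP1⟩ := pair_subset hrA hrA' htAA
  obtain ⟨p2, q2, hP2⟩ := pair_subset hrA hrB' htAB
  obtain ⟨p3, q3, hP3⟩ := pair_subset hrB hrA' htBA
  obtain ⟨p4, q4, hP4⟩ := pair_subset hrB hrB' htBB
  set big : Set ℂ := ({p1,q1} : Set ℂ) ∪ {p2,q2} ∪ {p3,q3} ∪ {p4,q4} with hbig
  have hbigfin : big.Finite :=
    ((((Set.finite_singleton _).insert _).union ((Set.finite_singleton _).insert _)).union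
      ((Set.finite_singleton _).insert _)).union ((Set.finite_singleton _).insert _)
  have hTsubQ : T ⊆ (Metric.sphere cA rA ∩ Metric.sphere cA' rA') ∪
      (Metric.sphere cA rA ∩ Metric.sphere cB' rB') ∪
      (Metric.sphere cB rB ∩ Metric.sphere cA' rA') ∪
      (Metric.sphere cB rB ∩ Metric.sphere cB' rB') := by
    intro z hz
    obtain ⟨hU, hPr⟩ := hdec z hz
    rcases hU with ⟨hA0, _⟩ | ⟨hB0, _⟩ <;> rcases hPr with ⟨h10, _⟩ | ⟨h20, _⟩
    · exact Or.inl (Or.inl (Or.inl ⟨(mem_sphere_iff_g hrA).mpr hA0,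
        (mem_sphere_iff_g hrA').mpr h10⟩))
    · exact Or.inl (Or.inl (Or.inr ⟨(mem_sphere_iff_g hrA).mpr hA0,
        (mem_sphere_iff_g hrB').mpr h20⟩))
    · exact Or.inl (Or.inr ⟨(mem_sphere_iff_g hrB).mpr hB0,
        (mem_sphere_iff_g hrA').mpr h10⟩)
    · exact Or.inr ⟨(mem_sphere_iff_g hrB).mpr hB0, (mem_sphere_iff_g hrB').mpr h20⟩
  have hTsub : T ⊆ big := by
    intro z hz
    rcases hTsubQ hz with ((h | h) | h) | h
    · exact Or.inl (Or.inl (Or.inl (hP1 h)))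
    · exact Or.inl (Or.inl (Or.inr (hP2 h)))
    · exact Or.inl (Or.inr (hP3 h))
    · exact Or.inr (hP4 h)
  have hTfin : T.Finite := hbigfin.subset hTsub
  have hpair : ∀ a b : ℂ, ({a, b} : Set ℂ).ncard ≤ 2 := by
    intro a b
    have := Set.ncard_insert_le a ({b} : Set ℂ)
    rwa [Set.ncard_singleton] at this
  have hbigcard : big.ncard ≤ 8 := by
    have h1 := Set.ncard_union_le (({p1,q1} : Set ℂ) ∪ {p2,q2} ∪ {p3,q3}) ({p4,q4} : Set ℂ)
    have h2 := Set.ncard_union_le (({p1,q1} : Set ℂ) ∪ {p2,q2}) ({p3,q3} : Set ℂ)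
    have h3 := Set.ncard_union_le ({p1,q1} : Set ℂ) ({p2,q2} : Set ℂ)
    have := hpair p1 q1; have := hpair p2 q2; have := hpair p3 q3; have := hpair p4 q4
    rw [hbig]
    omega
  have hT8 : T.ncard ≤ 8 := (Set.ncard_le_ncard hTsub hbigfin).trans hbigcard
  -- parametrization of the boundary of the first eye
  have hconv : Convex ℝ (closedBall cA rA ∩ closedBall cB rB) :=
    (convex_closedBall _ _).inter (convex_closedBall _ _)
  have hint : (interior (closedBall cA rA ∩ closedBall cB rB)).Nonempty := by
    rw [interior_inter, interior_closedBall _ hrA.ne', interior_closedBall _ hrB.ne']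
    exact ⟨zE, hzE⟩
  have hbd : Bornology.IsBounded (closedBall cA rA ∩ closedBall cB rB) :=
    Metric.isBounded_closedBall.subset Set.inter_subset_left
  obtain ⟨hom, _, _, hfr⟩ :=
    exists_homeomorph_image_interior_closure_frontier_eq_unitBall hconv hint hbd
  set γ : ℝ → ℂ := fun t => hom.symm (circleMap 0 1 t) with hγdef
  have hγc : Continuous γ := hom.symm.continuous.comp (continuous_circleMap 0 1)
  have hγmem : ∀ t, γ t ∈ frontier (closedBall cA rA ∩ closedBall cB rB) := by
    intro t
    have h1 : circleMap 0 1 t ∈ Metric.sphere (0:ℂ) 1 := circleMap_mem_sphere 0 one_pos.le t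
    rw [← hfr] at h1
    obtain ⟨x, hx, hhx⟩ := h1
    show hom.symm (circleMap 0 1 t) ∈ _
    rw [← hhx, Homeomorph.symm_apply_apply]
    exact hx
  have hmemγ : ∀ t, max (g cA rA (γ t)) (g cB rB (γ t)) = 0 := by
    intro t
    have := hγmem t
    rw [hfrE] at this
    exact this
  have hγeq : ∀ u v : ℝ, γ u = γ v → circleMap 0 1 u = circleMap 0 1 v :=
    fun u v h => hom.symm.injective h
  have hγsurj : ∀ p, p ∈ frontier (closedBall cA rA ∩ closedBall cB rB) →
      ∃ t ∈ Set.Ico (0:ℝ) (2*π), γ t = p := by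
    intro p hp
    have h1 : hom p ∈ Metric.sphere (0:ℂ) 1 := by
      rw [← hfr]; exact Set.mem_image_of_mem _ hp
    have h2 : hom p ∈ Set.range (circleMap 0 1) := by
      rw [range_circleMap]; simpa using h1
    obtain ⟨s, hs⟩ := h2
    obtain ⟨t, ht, hts⟩ := (periodic_circleMap 0 1).exists_mem_Ico₀ Real.two_pi_pos s
    refine ⟨t, ht, ?_⟩
    show hom.symm (circleMap 0 1 t) = p
    rw [← hts, hs, Homeomorph.symm_apply_apply]
  -- the crossing function
  set ψ : ℝ → ℝ := fun t => max (g cA' rA' (γ t)) (g cB' rB' (γ t)) with hψdef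
  have hψc : Continuous ψ := ((g_cont _ _).comp hγc).max ((g_cont _ _).comp hγc)
  have hγper : ∀ t, γ (t + 2*π) = γ t :=
    fun t => congrArg hom.symm (periodic_circleMap 0 1 t)
  have hψper : Function.Periodic ψ (2*π) := by
    intro t
    show max (g cA' rA' (γ (t + 2*π))) (g cB' rB' (γ (t + 2*π))) =
      max (g cA' rA' (γ t)) (g cB' rB' (γ t))
    rw [hγper t]
  set Z := {t | t ∈ Set.Ico (0:ℝ) (2*π) ∧ ψ t = 0} with hZdef
  have himg : γ '' Z = T := by
    apply Set.Subset.antisymm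
    · rintro _ ⟨t, ⟨htI, htψ⟩, rfl⟩
      exact (hTmem _).mpr ⟨hmemγ t, htψ⟩
    · intro p hp
      have hpE := (hTmem p).mp hp
      obtain ⟨t, htI, htp⟩ := hγsurj p (by rw [hfrE]; exact hpE.1)
      refine ⟨t, ⟨htI, ?_⟩, htp⟩
      show max (g cA' rA' (γ t)) (g cB' rB' (γ t)) = 0
      rw [htp]; exact hpE.2
  have hinjOn : Set.InjOn γ Z := by
    intro u hu v hv huv
    apply circle_inj (hγeq u v huv)
    obtain ⟨⟨hu1, hu2⟩, _⟩ := hu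
    obtain ⟨⟨hv1, hv2⟩, _⟩ := hv
    rw [abs_lt]
    constructor <;> linarith
  have hZfin : Z.Finite := Set.Finite.of_finite_image (himg ▸ hTfin) hinjOn
  have hNcard : T.ncard = Z.ncard := by
    rw [← himg, Set.ncard_image_of_injOn hinjOn]
  -- local injectivity
  have hloc : ∀ t₀ u v : ℝ, |u - t₀| < 1 → |v - t₀| < 1 → γ u = γ v → u = v := by
    intro t₀ u v hu hv huv
    apply circle_inj (hγeq u v huv)
    have hπ := Real.pi_gt_three
    rw [abs_lt] at hu hv ⊢
    constructor <;> [linarith [hu.1, hv.2]; linarith [hu.2, hv.1]]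
  -- every zero of ψ is a strict crossing
  have hcross : ∀ t, ψ t = 0 → Cross ψ t := by
    intro t ht
    have hzT : γ t ∈ T := (hTmem (γ t)).mpr ⟨hmemγ t, ht⟩
    obtain ⟨hU, hPr⟩ := hdec (γ t) hzT
    have hmemγB : ∀ u, max (g cB rB (γ u)) (g cA rA (γ u)) = 0 :=
      fun u => by rw [max_comm]; exact hmemγ u
    rcases hU with ⟨hA0, hBneg⟩ | ⟨hB0, hAneg⟩ <;>
      rcases hPr with ⟨hA'0, hB'neg⟩ | ⟨hB'0, hA'neg⟩
    · have htr := htAA ⟨γ t, (mem_sphere_iff_g hrA).mpr hA0, (mem_sphere_iff_g hrA').mpr hA'0⟩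
      exact cross_aux hrA hrA' hγc hmemγ (hloc t) hBneg hA'0 hB'neg htr.1 htr.2
    · have htr := htAB ⟨γ t, (mem_sphere_iff_g hrA).mpr hA0, (mem_sphere_iff_g hrB').mpr hB'0⟩
      have hc := cross_aux hrA hrB' hγc hmemγ (hloc t) hBneg hB'0 hA'neg htr.1 htr.2
      have hfe : (fun u => max (g cB' rB' (γ u)) (g cA' rA' (γ u))) = ψ := by
        funext u; exact max_comm _ _
      rwa [hfe] at hc
    · have htr := htBA ⟨γ t, (mem_sphere_iff_g hrB).mpr hB0, (mem_sphere_iff_g hrA').mpr hA'0⟩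
      exact cross_aux hrB hrA' hγc hmemγB (hloc t) hAneg hA'0 hB'neg htr.1 htr.2
    · have htr := htBB ⟨γ t, (mem_sphere_iff_g hrB).mpr hB0, (mem_sphere_iff_g hrB').mpr hB'0⟩
      have hc := cross_aux hrB hrB' hγc hmemγB (hloc t) hAneg hB'0 hA'neg htr.1 htr.2
      have hfe : (fun u => max (g cB' rB' (γ u)) (g cA' rA' (γ u))) = ψ := by
        funext u; exact max_comm _ _
      rwa [hfe] at hc
  have hEvenZ := parity Real.two_pi_pos hψc hψper hZfin hcross
  have hEven : Even T.ncard := by rw [hNcard]; exact hEvenZ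
  -- exclusion of eight intersection points
  have hne8 : T.ncard ≠ 8 := by
    intro h8
    -- every chord endpoint belongs to T
    have hQsub : ∀ z, z ∈ (Metric.sphere cA rA ∩ Metric.sphere cA' rA') ∪
        (Metric.sphere cA rA ∩ Metric.sphere cB' rB') ∪
        (Metric.sphere cB rB ∩ Metric.sphere cA' rA') ∪
        (Metric.sphere cB rB ∩ Metric.sphere cB' rB') → z ∈ T := by
      intro z hz
      by_contra hzT
      have hzbig : z ∈ big := by
        rcases hz with ((h | h) | h) | h
        · exact Or.inl (Or.inl (Or.inl (hP1 h)))
        · exact Or.inl (Or.inl (Or.inr (hP2 h)))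
        · exact Or.inl (Or.inr (hP3 h))
        · exact Or.inr (hP4 h)
      have hsub2 : T ⊆ big \ {z} := by
        intro x hx
        refine ⟨hTsub hx, ?_⟩
        simp only [Set.mem_singleton_iff]
        rintro rfl
        exact hzT hx
      have hle := Set.ncard_le_ncard hsub2 (hbigfin.subset Set.diff_subset)
      have hlt := Set.ncard_diff_singleton_lt_of_mem hzbig hbigfin
      omega
    -- each pair of circles meets
    have hQ1ne : (Metric.sphere cA rA ∩ Metric.sphere cA' rA').Nonempty := by
      rw [Set.nonempty_iff_ne_empty]
      intro hq
      have hsub : T ⊆ (Metric.sphere cA rA ∩ Metric.sphere cB' rB') ∪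
          (Metric.sphere cB rB ∩ Metric.sphere cA' rA') ∪
          (Metric.sphere cB rB ∩ Metric.sphere cB' rB') := by
        intro z hz
        rcases hTsubQ hz with ((h | h) | h) | h
        · rw [hq] at h; exact absurd h (Set.notMem_empty z)
        · exact Or.inl (Or.inl h)
        · exact Or.inl (Or.inr h)
        · exact Or.inr h
      have := card6 hP2 hP3 hP4 hsub
      omega
    have hQ2ne : (Metric.sphere cA rA ∩ Metric.sphere cB' rB').Nonempty := by
      rw [Set.nonempty_iff_ne_empty]
      intro hq
      have hsub : T ⊆ (Metric.sphere cA rA ∩ Metric.sphere cA' rA') ∪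
          (Metric.sphere cB rB ∩ Metric.sphere cA' rA') ∪
          (Metric.sphere cB rB ∩ Metric.sphere cB' rB') := by
        intro z hz
        rcases hTsubQ hz with ((h | h) | h) | h
        · exact Or.inl (Or.inl h)
        · rw [hq] at h; exact absurd h (Set.notMem_empty z)
        · exact Or.inl (Or.inr h)
        · exact Or.inr h
      have := card6 hP1 hP3 hP4 hsub
      omega
    have hQ3ne : (Metric.sphere cB rB ∩ Metric.sphere cA' rA').Nonempty := by
      rw [Set.nonempty_iff_ne_empty]
      intro hq
      have hsub : T ⊆ (Metric.sphere cA rA ∩ Metric.sphere cA' rA') ∪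
          (Metric.sphere cA rA ∩ Metric.sphere cB' rB') ∪
          (Metric.sphere cB rB ∩ Metric.sphere cB' rB') := by
        intro z hz
        rcases hTsubQ hz with ((h | h) | h) | h
        · exact Or.inl (Or.inl h)
        · exact Or.inl (Or.inr h)
        · rw [hq] at h; exact absurd h (Set.notMem_empty z)
        · exact Or.inr h
      have := card6 hP1 hP2 hP4 hsub
      omega
    have hQ4ne : (Metric.sphere cB rB ∩ Metric.sphere cB' rB').Nonempty := by
      rw [Set.nonempty_iff_ne_empty]
      intro hq
      have hsub : T ⊆ (Metric.sphere cA rA ∩ Metric.sphere cA' rA') ∪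
          (Metric.sphere cA rA ∩ Metric.sphere cB' rB') ∪
          (Metric.sphere cB rB ∩ Metric.sphere cA' rA') := by
        intro z hz
        rcases hTsubQ hz with ((h | h) | h) | h
        · exact Or.inl (Or.inl h)
        · exact Or.inl (Or.inr h)
        · exact Or.inr h
        · rw [hq] at h; exact absurd h (Set.notMem_empty z)
      have := card6 hP1 hP2 hP3 hsub
      omega
    -- strict containment properties of chord points
    have hQ1prop : ∀ z ∈ Metric.sphere cA rA ∩ Metric.sphere cA' rA',
        g cB rB z < 0 ∧ g cB' rB' z < 0 := by
      intro z hz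
      obtain ⟨hU, hPr⟩ := hdec z (hQsub z (Or.inl (Or.inl (Or.inl hz))))
      have hA0 : g cA rA z = 0 := (mem_sphere_iff_g hrA).mp hz.1
      have hA'0 : g cA' rA' z = 0 := (mem_sphere_iff_g hrA').mp hz.2
      constructor
      · rcases hU with ⟨_, h⟩ | ⟨_, h⟩
        · exact h
        · exact absurd hA0 h.ne
      · rcases hPr with ⟨_, h⟩ | ⟨_, h⟩
        · exact h
        · exact absurd hA'0 h.ne
    have hQ2prop : ∀ z ∈ Metric.sphere cA rA ∩ Metric.sphere cB' rB',
        g cB rB z < 0 ∧ g cA' rA' z < 0 := by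
      intro z hz
      obtain ⟨hU, hPr⟩ := hdec z (hQsub z (Or.inl (Or.inl (Or.inr hz))))
      have hA0 : g cA rA z = 0 := (mem_sphere_iff_g hrA).mp hz.1
      have hB'0 : g cB' rB' z = 0 := (mem_sphere_iff_g hrB').mp hz.2
      constructor
      · rcases hU with ⟨_, h⟩ | ⟨_, h⟩
        · exact h
        · exact absurd hA0 h.ne
      · rcases hPr with ⟨_, h⟩ | ⟨_, h⟩
        · exact absurd hB'0 h.ne
        · exact h
    have hQ3prop : ∀ z ∈ Metric.sphere cB rB ∩ Metric.sphere cA' rA',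
        g cA rA z < 0 ∧ g cB' rB' z < 0 := by
      intro z hz
      obtain ⟨hU, hPr⟩ := hdec z (hQsub z (Or.inl (Or.inr hz)))
      have hB0 : g cB rB z = 0 := (mem_sphere_iff_g hrB).mp hz.1
      have hA'0 : g cA' rA' z = 0 := (mem_sphere_iff_g hrA').mp hz.2
      constructor
      · rcases hU with ⟨_, h⟩ | ⟨_, h⟩
        · exact absurd hB0 h.ne
        · exact h
      · rcases hPr with ⟨_, h⟩ | ⟨_, h⟩
        · exact h
        · exact absurd hA'0 h.ne
    have hQ4prop : ∀ z ∈ Metric.sphere cB rB ∩ Metric.sphere cB' rB',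
        g cA rA z < 0 ∧ g cA' rA' z < 0 := by
      intro z hz
      obtain ⟨hU, hPr⟩ := hdec z (hQsub z (Or.inr hz))
      have hB0 : g cB rB z = 0 := (mem_sphere_iff_g hrB).mp hz.1
      have hB'0 : g cB' rB' z = 0 := (mem_sphere_iff_g hrB').mp hz.2
      constructor
      · rcases hU with ⟨_, h⟩ | ⟨_, h⟩
        · exact absurd hB0 h.ne
        · exact h
      · rcases hPr with ⟨_, h⟩ | ⟨_, h⟩
        · exact absurd hB'0 h.ne
        · exact h
    -- each circle is covered by the two opposite open disks
    have hcovA : ∀ z ∈ Metric.sphere cA rA, min (g cA' rA' z) (g cB' rB' z) < 0 := by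
      apply coverage hrA.le
      · obtain ⟨z₀, hz₀⟩ := hQ1ne
        exact ⟨z₀, hz₀.1, lt_of_le_of_lt (min_le_right _ _) (hQ1prop z₀ hz₀).2⟩
      · intro z hz h0
        rcases min_cases (g cA' rA' z) (g cB' rB' z) with ⟨he, hle⟩ | ⟨he, hle⟩
        · have hA'0 : g cA' rA' z = 0 := by rw [← he, h0]
          have := (hQ1prop z ⟨hz, (mem_sphere_iff_g hrA').mpr hA'0⟩).2
          rw [hA'0] at hle
          linarith
        · have hB'0 : g cB' rB' z = 0 := by rw [← he, h0]
          have := (hQ2prop z ⟨hz, (mem_sphere_iff_g hrB').mpr hB'0⟩).2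
          rw [hB'0] at hle
          linarith
    have hcovB : ∀ z ∈ Metric.sphere cB rB, min (g cA' rA' z) (g cB' rB' z) < 0 := by
      apply coverage hrB.le
      · obtain ⟨z₀, hz₀⟩ := hQ3ne
        exact ⟨z₀, hz₀.1, lt_of_le_of_lt (min_le_right _ _) (hQ3prop z₀ hz₀).2⟩
      · intro z hz h0
        rcases min_cases (g cA' rA' z) (g cB' rB' z) with ⟨he, hle⟩ | ⟨he, hle⟩
        · have hA'0 : g cA' rA' z = 0 := by rw [← he, h0]
          have := (hQ3prop z ⟨hz, (mem_sphere_iff_g hrA').mpr hA'0⟩).2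
          rw [hA'0] at hle
          linarith
        · have hB'0 : g cB' rB' z = 0 := by rw [← he, h0]
          have := (hQ4prop z ⟨hz, (mem_sphere_iff_g hrB').mpr hB'0⟩).2
          rw [hB'0] at hle
          linarith
    have hcovA' : ∀ z ∈ Metric.sphere cA' rA', min (g cA rA z) (g cB rB z) < 0 := by
      apply coverage hrA'.le
      · obtain ⟨z₀, hz₀⟩ := hQ1ne
        exact ⟨z₀, hz₀.2, lt_of_le_of_lt (min_le_right _ _) (hQ1prop z₀ hz₀).1⟩
      · intro z hz h0
        rcases min_cases (g cA rA z) (g cB rB z) with ⟨he, hle⟩ | ⟨he, hle⟩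
        · have hA0 : g cA rA z = 0 := by rw [← he, h0]
          have := (hQ1prop z ⟨(mem_sphere_iff_g hrA).mpr hA0, hz⟩).1
          rw [hA0] at hle
          linarith
        · have hB0 : g cB rB z = 0 := by rw [← he, h0]
          have := (hQ3prop z ⟨(mem_sphere_iff_g hrB).mpr hB0, hz⟩).1
          rw [hB0] at hle
          linarith
    have hcovB' : ∀ z ∈ Metric.sphere cB' rB', min (g cA rA z) (g cB rB z) < 0 := by
      apply coverage hrB'.le
      · obtain ⟨z₀, hz₀⟩ := hQ2ne
        exact ⟨z₀, hz₀.2, lt_of_le_of_lt (min_le_right _ _) (hQ2prop z₀ hz₀).1⟩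
      · intro z hz h0
        rcases min_cases (g cA rA z) (g cB rB z) with ⟨he, hle⟩ | ⟨he, hle⟩
        · have hA0 : g cA rA z = 0 := by rw [← he, h0]
          have := (hQ2prop z ⟨(mem_sphere_iff_g hrA).mpr hA0, hz⟩).1
          rw [hA0] at hle
          linarith
        · have hB0 : g cB rB z = 0 := by rw [← he, h0]
          have := (hQ4prop z ⟨(mem_sphere_iff_g hrB).mpr hB0, hz⟩).1
          rw [hB0] at hle
          linarith
    -- farthest-point contradiction
    have hKcomp : IsCompact (Metric.sphere cA rA ∪ Metric.sphere cB rB ∪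
        Metric.sphere cA' rA' ∪ Metric.sphere cB' rB') :=
      (((isCompact_sphere _ _).union (isCompact_sphere _ _)).union
        (isCompact_sphere _ _)).union (isCompact_sphere _ _)
    have hKne : (Metric.sphere cA rA ∪ Metric.sphere cB rB ∪
        Metric.sphere cA' rA' ∪ Metric.sphere cB' rB').Nonempty := by
      obtain ⟨z₀, hz₀⟩ := hQ1ne
      exact ⟨z₀, Or.inl (Or.inl (Or.inl hz₀.1))⟩
    obtain ⟨v, hvK, hvmax'⟩ := hKcomp.exists_isMaxOn hKne continuous_norm.continuousOn
    have hvmax : ∀ z ∈ Metric.sphere cA rA ∪ Metric.sphere cB rB ∪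
        Metric.sphere cA' rA' ∪ Metric.sphere cB' rB', ‖z‖ ≤ ‖v‖ := fun z hz => hvmax' hz
    have hmaxA : ∀ z ∈ Metric.sphere cA rA, ‖z‖ ≤ ‖v‖ :=
      fun z hz => hvmax z (Or.inl (Or.inl (Or.inl hz)))
    have hmaxB : ∀ z ∈ Metric.sphere cB rB, ‖z‖ ≤ ‖v‖ :=
      fun z hz => hvmax z (Or.inl (Or.inl (Or.inr hz)))
    have hmaxA' : ∀ z ∈ Metric.sphere cA' rA', ‖z‖ ≤ ‖v‖ :=
      fun z hz => hvmax z (Or.inl (Or.inr hz))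
    have hmaxB' : ∀ z ∈ Metric.sphere cB' rB', ‖z‖ ≤ ‖v‖ :=
      fun z hz => hvmax z (Or.inr hz)
    rcases hvK with ((hv | hv) | hv) | hv
    · rcases min_lt_iff.mp (hcovA v hv) with h | h
      · exact max_step hrA' (mem_ball.mp ((mem_ball_iff_g hrA').mpr h)) hmaxA'
      · exact max_step hrB' (mem_ball.mp ((mem_ball_iff_g hrB').mpr h)) hmaxB'
    · rcases min_lt_iff.mp (hcovB v hv) with h | h
      · exact max_step hrA' (mem_ball.mp ((mem_ball_iff_g hrA').mpr h)) hmaxA'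
      · exact max_step hrB' (mem_ball.mp ((mem_ball_iff_g hrB').mpr h)) hmaxB'
    · rcases min_lt_iff.mp (hcovA' v hv) with h | h
      · exact max_step hrA (mem_ball.mp ((mem_ball_iff_g hrA).mpr h)) hmaxA
      · exact max_step hrB (mem_ball.mp ((mem_ball_iff_g hrB).mpr h)) hmaxB
    · rcases min_lt_iff.mp (hcovB' v hv) with h | h
      · exact max_step hrA (mem_ball.mp ((mem_ball_iff_g hrA).mpr h)) hmaxA
      · exact max_step hrB (mem_ball.mp ((mem_ball_iff_g hrB).mpr h)) hmaxB
  -- conclusion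
  refine ⟨hTfin, ?_⟩
  have hvals : T.ncard = 0 ∨ T.ncard = 2 ∨ T.ncard = 4 ∨ T.ncard = 6 := by
    obtain ⟨k, hk⟩ := hEven
    omega
  simpa [Set.mem_insert_iff, Set.mem_singleton_iff] using hvals
end
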